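/- arXiv:2005.13752 — 5 statements merged into one kernel-verified Lean document; each statement's English description precedes it below -/
import Mathlib

section
/- For all probability measures m, φ, θ on G, one has Δ(m, φ * θ) ≤ Δ(m * φ, θ) + Δ(φ, θ), i.e., ∫_G ‖g(φ * θ) − φ * θ‖ dm(g) ≤ ∫_G ‖gθ − θ‖ d(m * φ)(g) + ∫_G ‖gθ − θ‖ dφ(g). -/
open MeasureTheory Filter Topology

/-- Total variation norm `‖μ − ν‖` of the difference of two finite measures. -/
noncomputable def tv {α : Type*} [MeasurableSpace α] (μ ν : Measure α) : ℝ :=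
  ((μ - ν) Set.univ + (ν - μ) Set.univ).toReal

/-- Pushforward `gμ` of a measure on `G` under the left translation `h ↦ g * h`. -/
noncomputable def ltrans {G : Type*} [MeasurableSpace G] [Mul G] (g : G) (μ : Measure G) :
    Measure G :=
  μ.map (fun h => g * h)

/-- Convolution `α * β` of measures on `G`: the pushforward of `α ⊗ β` under
`(g, h) ↦ g * h`. -/
noncomputable def mconv {G : Type*} [MeasurableSpace G] [Mul G] (μ ν : Measure G) : Measure G :=
  (μ.prod ν).map (fun p : G × G => p.1 * p.2)

/-- `convPow θ k = θ^{*k}`, the `k`-th convolution power of `θ` (with `θ^{*0} = δ_1`). -/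
noncomputable def convPow {G : Type*} [MeasurableSpace G] [Monoid G] (θ : Measure G) :
    ℕ → Measure G
  | 0 => Measure.dirac 1
  | (k + 1) => mconv θ (convPow θ k)

/-- Mean discrepancy `Δ(m, θ) = ∫_G ‖gθ − θ‖ dm(g)`. -/
noncomputable def disc {G : Type*} [MeasurableSpace G] [Mul G] (m θ : Measure G) : ℝ :=
  ∫ g, tv (ltrans g θ) θ ∂m

open Set
open scoped ENNReal NNReal

section auxgen

variable {α : Type*} [MeasurableSpace α]

/-- Hahn decomposition package for truncated measure subtraction. -/
lemma hahn_pack (μ ν : Measure α) [IsFiniteMeasure μ] [IsFiniteMeasure ν] :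
    ∃ s : Set α, MeasurableSet s ∧
      (∀ t, MeasurableSet t → t ⊆ sᶜ → μ t ≤ ν t) ∧
      (∀ t, MeasurableSet t → (μ - ν) (t ∩ s) = μ (t ∩ s) - ν (t ∩ s)) ∧
      (μ - ν) Set.univ = μ s - ν s := by
  obtain ⟨s, hs, h₁, h₂⟩ := hahn_decomposition (μ := μ) (ν := ν)
  have hres : ν.restrict s ≤ μ.restrict s := by
    refine Measure.le_iff.2 fun t ht => ?_
    rw [Measure.restrict_apply ht, Measure.restrict_apply ht]
    exact h₁ _ (ht.inter hs) inter_subset_right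
  have hform : ∀ t, MeasurableSet t → (μ - ν) (t ∩ s) = μ (t ∩ s) - ν (t ∩ s) := by
    intro t ht
    rw [← Measure.restrict_apply ht, Measure.restrict_sub_eq_restrict_sub_restrict hs,
      Measure.sub_apply ht hres, Measure.restrict_apply ht, Measure.restrict_apply ht]
  refine ⟨s, hs, h₂, hform, le_antisymm ?_ ?_⟩
  · have hle : μ - ν ≤ μ.restrict s - ν.restrict s := by
      apply Measure.sub_le_of_le_add
      refine Measure.le_iff.2 fun t ht => ?_
      have h3 : (μ.restrict s - ν.restrict s) t = μ (t ∩ s) - ν (t ∩ s) := by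
        rw [Measure.sub_apply ht hres, Measure.restrict_apply ht, Measure.restrict_apply ht]
      have h4 : μ (t ∩ s) ≤ (μ (t ∩ s) - ν (t ∩ s)) + ν (t ∩ s) := le_tsub_add
      have h5 : μ (t \ s) ≤ ν (t \ s) := h₂ _ (ht.diff hs) (diff_subset_compl t s)
      calc μ t = μ (t ∩ s) + μ (t \ s) := (measure_inter_add_diff t hs).symm
        _ ≤ ((μ (t ∩ s) - ν (t ∩ s)) + ν (t ∩ s)) + ν (t \ s) := add_le_add h4 h5
        _ = (μ.restrict s - ν.restrict s) t + ν t := by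
            rw [h3, add_assoc, measure_inter_add_diff t hs]
    calc (μ - ν) Set.univ ≤ (μ.restrict s - ν.restrict s) Set.univ :=
          Measure.le_iff'.1 hle Set.univ
      _ = μ s - ν s := by
          rw [Measure.sub_apply MeasurableSet.univ hres, Measure.restrict_apply_univ,
            Measure.restrict_apply_univ]
  · have h6 := hform Set.univ MeasurableSet.univ
    rw [Set.univ_inter] at h6
    rw [← h6]
    exact measure_mono (subset_univ s)

/-- `μ ≤ (μ - ν) + ν` for finite measures. -/
lemma measure_le_sub_add (μ ν : Measure α) [IsFiniteMeasure μ] [IsFiniteMeasure ν] :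
    μ ≤ (μ - ν) + ν := by
  obtain ⟨s, hs, h₂, hform, -⟩ := hahn_pack μ ν
  refine Measure.le_iff.2 fun t ht => ?_
  have h3 : μ (t ∩ s) ≤ (μ - ν) (t ∩ s) + ν (t ∩ s) := by
    rw [hform t ht]; exact le_tsub_add
  have h5 : μ (t \ s) ≤ ν (t \ s) := h₂ _ (ht.diff hs) (diff_subset_compl t s)
  calc μ t = μ (t ∩ s) + μ (t \ s) := (measure_inter_add_diff t hs).symm
    _ ≤ ((μ - ν) (t ∩ s) + ν (t ∩ s)) + ν (t \ s) := add_le_add h3 h5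
    _ ≤ (μ - ν) t + (ν (t ∩ s) + ν (t \ s)) := by
        rw [add_assoc]
        exact add_le_add_left (measure_mono (μ := μ - ν) inter_subset_left) _
    _ = (μ - ν) t + ν t := by rw [measure_inter_add_diff t hs]

/-- Key pointwise bound: `μ t ≤ (μ - ν) univ + ν t`. -/
lemma measure_apply_le_sub_univ_add (μ ν : Measure α) [IsFiniteMeasure μ] [IsFiniteMeasure ν]
    (t : Set α) : μ t ≤ (μ - ν) Set.univ + ν t :=
  (Measure.le_iff'.1 (measure_le_sub_add μ ν) t).trans
    (add_le_add_left (measure_mono (subset_univ t)) _)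

/-- Triangle inequality for the positive part of the total variation. -/
lemma sub_univ_triangle (μ ν ξ : Measure α) [IsFiniteMeasure μ] [IsFiniteMeasure ν]
    [IsFiniteMeasure ξ] : (μ - ξ) Set.univ ≤ (μ - ν) Set.univ + (ν - ξ) Set.univ := by
  have hle : μ - ξ ≤ (μ - ν) + (ν - ξ) := by
    apply Measure.sub_le_of_le_add
    calc μ ≤ (μ - ν) + ν := measure_le_sub_add μ ν
      _ ≤ (μ - ν) + ((ν - ξ) + ξ) := add_le_add_right (measure_le_sub_add ν ξ) _
      _ = ((μ - ν) + (ν - ξ)) + ξ := by rw [add_assoc]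
  exact Measure.le_iff'.1 hle Set.univ

/-- Countable-sup formula for the positive part of the total variation. -/
lemma sub_univ_eq_iSup {G : Type*} [TopologicalSpace G] [MeasurableSpace G] [BorelSpace G]
    (β : ℕ → Set G) (hβo : ∀ i, IsOpen (β i))
    (hβb : ∀ U : Set G, IsOpen U → ∀ x ∈ U, ∃ i, x ∈ β i ∧ β i ⊆ U)
    (μ ν : Measure G) [IsFiniteMeasure μ] [IsFiniteMeasure ν] [ν.OuterRegular] :
    (μ - ν) Set.univ
      = ⨆ I : Finset ℕ, (μ (⋃ i ∈ I, β i) - ν (⋃ i ∈ I, β i)) := by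
  classical
  set W : Finset ℕ → Set G := fun I => ⋃ i ∈ I, β i with hWdef
  set SUP := ⨆ I : Finset ℕ, (μ (W I) - ν (W I)) with hSUP
  apply le_antisymm
  · obtain ⟨s, hs, -, -, hform⟩ := hahn_pack μ ν
    rw [hform]
    refine ENNReal.le_of_forall_pos_le_add fun ε hε _ => ?_
    have hεne : (ε : ℝ≥0∞) ≠ 0 := by exact_mod_cast hε.ne'
    obtain ⟨U, hsU, hUo, hU⟩ := Set.exists_isOpen_lt_add s (measure_ne_top ν s) hεne
    set S : ℕ → Finset ℕ := fun n => (Finset.range n).filter (fun i => β i ⊆ U) with hS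
    have hWU : ∀ n, W (S n) ⊆ U := by
      intro n
      refine Set.iUnion₂_subset fun i hi => ?_
      exact (Finset.mem_filter.1 hi).2
    have hmono : Monotone fun n => W (S n) := by
      intro a b hab
      apply Set.biUnion_subset_biUnion_left
      intro i hi
      have hi' := Finset.mem_filter.1 hi
      exact Finset.mem_filter.2
        ⟨Finset.mem_range.2 (lt_of_lt_of_le (Finset.mem_range.1 hi'.1) hab), hi'.2⟩
    have hUeq : (⋃ n, W (S n)) = U := by
      apply Set.Subset.antisymm (Set.iUnion_subset hWU)
      intro x hx
      obtain ⟨i, hxi, hiU⟩ := hβb U hUo x hx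
      refine Set.mem_iUnion.2 ⟨i + 1, ?_⟩
      exact Set.mem_biUnion
        (Finset.mem_filter.2 ⟨Finset.mem_range.2 (Nat.lt_succ_self i), hiU⟩) hxi
    have hμU : μ U = ⨆ n, μ (W (S n)) := by
      rw [← hUeq]; exact hmono.measure_iUnion
    have hterm : ∀ n, μ (W (S n)) ≤ SUP + ν U := by
      intro n
      have h1 : μ (W (S n)) ≤ (μ (W (S n)) - ν (W (S n))) + ν (W (S n)) := le_tsub_add
      have h2 : μ (W (S n)) - ν (W (S n)) ≤ SUP := le_iSup (fun I => μ (W I) - ν (W I)) (S n)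
      exact h1.trans (add_le_add h2 (measure_mono (hWU n)))
    have hμs : μ s ≤ (SUP + ε) + ν s := by
      calc μ s ≤ μ U := measure_mono hsU
        _ = ⨆ n, μ (W (S n)) := hμU
        _ ≤ SUP + ν U := iSup_le hterm
        _ ≤ SUP + (ν s + ε) := add_le_add_right hU.le _
        _ = (SUP + ε) + ν s := by ring
    exact tsub_le_iff_right.2 hμs
  · refine iSup_le fun I => ?_
    exact tsub_le_iff_right.2 (measure_apply_le_sub_univ_add μ ν (W I))

end auxgen

section grp

set_option linter.unusedSectionVars false

variable {G : Type*} [TopologicalSpace G] [Group G] [IsTopologicalGroup G]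
  [SecondCountableTopology G] [MeasurableSpace G] [BorelSpace G]

instance ltrans_fin (g : G) (θ : Measure G) [IsFiniteMeasure θ] :
    IsFiniteMeasure (ltrans g θ) := by
  unfold ltrans; infer_instance

instance ltrans_prob (g : G) (θ : Measure G) [IsProbabilityMeasure θ] :
    IsProbabilityMeasure (ltrans g θ) :=
  Measure.isProbabilityMeasure_map (measurable_const_mul g).aemeasurable

instance mconv_prob (μ ν : Measure G) [IsProbabilityMeasure μ] [IsProbabilityMeasure ν] :
    IsProbabilityMeasure (mconv μ ν) :=
  Measure.isProbabilityMeasure_map measurable_mul.aemeasurable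

lemma ltrans_apply (g : G) (θ : Measure G) {t : Set G} (ht : MeasurableSet t) :
    ltrans g θ t = θ (Prod.mk g ⁻¹' ((fun p : G × G => p.1 * p.2) ⁻¹' t)) := by
  rw [ltrans, Measure.map_apply (measurable_const_mul g) ht]; rfl

lemma meas_ltrans_apply (θ : Measure G) [SFinite θ] {t : Set G} (ht : MeasurableSet t) :
    Measurable fun g : G => ltrans g θ t := by
  simp_rw [fun g : G => ltrans_apply g θ ht]
  exact measurable_measure_prodMk_left (measurable_mul ht)

lemma mconv_apply (α θ : Measure G) [SFinite α] [SFinite θ] {t : Set G} (ht : MeasurableSet t) :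
    mconv α θ t = ∫⁻ g, ltrans g θ t ∂α := by
  rw [mconv, Measure.map_apply measurable_mul ht, Measure.prod_apply (measurable_mul ht)]
  exact lintegral_congr fun g => (ltrans_apply g θ ht).symm

lemma ltrans_mconv (g : G) (φ θ : Measure G) [SFinite φ] [SFinite θ] :
    ltrans g (mconv φ θ) = mconv (ltrans g φ) θ := by
  have h1 : ltrans g (mconv φ θ)
      = (φ.prod θ).map ((fun h => g * h) ∘ fun p : G × G => p.1 * p.2) := by
    rw [ltrans, mconv, Measure.map_map (measurable_const_mul g) measurable_mul]
  have h2 : mconv (ltrans g φ) θ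
      = (φ.prod θ).map ((fun p : G × G => p.1 * p.2) ∘ Prod.map (fun h => g * h) id) := by
    rw [mconv, ltrans]
    conv_lhs => rw [← Measure.map_id (μ := θ)]
    rw [Measure.map_prod_map _ _ (measurable_const_mul g) measurable_id,
      Measure.map_map measurable_mul ((measurable_const_mul g).prodMap measurable_id)]
  rw [h1, h2]
  congr 1
  ext p
  simp [Function.comp, Prod.map, mul_assoc]

lemma lintegral_ltrans (g : G) (φ : Measure G) {f : G → ℝ≥0∞} (hf : Measurable f) :
    ∫⁻ h, f h ∂(ltrans g φ) = ∫⁻ h, f (g * h) ∂φ := by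
  rw [ltrans, lintegral_map hf (measurable_const_mul g)]

lemma lintegral_mconv (m φ : Measure G) [SFinite m] [SFinite φ] {f : G → ℝ≥0∞}
    (hf : Measurable f) :
    ∫⁻ x, f x ∂(mconv m φ) = ∫⁻ g, ∫⁻ h, f (g * h) ∂φ ∂m := by
  rw [mconv, lintegral_map hf measurable_mul, lintegral_prod]
  exact (hf.comp measurable_mul).aemeasurable

lemma ineq2a (α θ : Measure G) [IsProbabilityMeasure α] [IsProbabilityMeasure θ] :
    (mconv α θ - θ) Set.univ ≤ ∫⁻ h, (ltrans h θ - θ) Set.univ ∂α := by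
  obtain ⟨s, hs, -, -, hform⟩ := hahn_pack (mconv α θ) θ
  rw [hform, tsub_le_iff_right]
  calc mconv α θ s = ∫⁻ h, ltrans h θ s ∂α := mconv_apply α θ hs
    _ ≤ ∫⁻ h, ((ltrans h θ - θ) Set.univ + θ s) ∂α :=
        lintegral_mono fun h => measure_apply_le_sub_univ_add (ltrans h θ) θ s
    _ = (∫⁻ h, (ltrans h θ - θ) Set.univ ∂α) + θ s := by
        rw [lintegral_add_right _ measurable_const, lintegral_const, measure_univ, mul_one]

lemma ineq2b (α θ : Measure G) [IsProbabilityMeasure α] [IsProbabilityMeasure θ] :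
    (θ - mconv α θ) Set.univ ≤ ∫⁻ h, (θ - ltrans h θ) Set.univ ∂α := by
  obtain ⟨s, hs, -, -, hform⟩ := hahn_pack θ (mconv α θ)
  rw [hform, tsub_le_iff_right]
  calc θ s = ∫⁻ _, θ s ∂α := by rw [lintegral_const, measure_univ, mul_one]
    _ ≤ ∫⁻ h, ((θ - ltrans h θ) Set.univ + ltrans h θ s) ∂α :=
        lintegral_mono fun h => measure_apply_le_sub_univ_add θ (ltrans h θ) s
    _ = (∫⁻ h, (θ - ltrans h θ) Set.univ ∂α) + ∫⁻ h, ltrans h θ s ∂α := by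
        rw [lintegral_add_right _ (meas_ltrans_apply θ hs)]
    _ = (∫⁻ h, (θ - ltrans h θ) Set.univ ∂α) + mconv α θ s := by rw [mconv_apply α θ hs]

lemma measE (θ : Measure G) [IsFiniteMeasure θ] :
    Measurable (fun g : G => (ltrans g θ - θ) Set.univ)
      ∧ Measurable (fun g : G => (θ - ltrans g θ) Set.univ) := by
  classical
  have hcb : (insert (∅ : Set G) (TopologicalSpace.countableBasis G)).Countable :=
    (TopologicalSpace.countable_countableBasis G).insert ∅
  obtain ⟨β, hβ⟩ := hcb.exists_eq_range (Set.insert_nonempty _ _)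
  have hβo : ∀ i, IsOpen (β i) := by
    intro i
    have : β i ∈ insert (∅ : Set G) (TopologicalSpace.countableBasis G) := by
      rw [hβ]; exact Set.mem_range_self i
    rcases Set.mem_insert_iff.1 this with h | h
    · rw [h]; exact isOpen_empty
    · exact TopologicalSpace.isOpen_of_mem_countableBasis h
  have hβb : ∀ U : Set G, IsOpen U → ∀ x ∈ U, ∃ i, x ∈ β i ∧ β i ⊆ U := by
    intro U hU x hx
    obtain ⟨V, hVb, hxV, hVU⟩ :=
      (TopologicalSpace.isBasis_countableBasis G).exists_subset_of_mem_open hx hU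
    have : V ∈ insert (∅ : Set G) (TopologicalSpace.countableBasis G) :=
      Set.mem_insert_of_mem _ hVb
    rw [hβ] at this
    obtain ⟨i, rfl⟩ := this
    exact ⟨i, hxV, hVU⟩
  have hWm : ∀ I : Finset ℕ, MeasurableSet (⋃ i ∈ I, β i) :=
    fun I => (isOpen_biUnion fun i _ => hβo i).measurableSet
  constructor
  · have heq : (fun g : G => (ltrans g θ - θ) Set.univ)
        = fun g => ⨆ I : Finset ℕ, (ltrans g θ (⋃ i ∈ I, β i) - θ (⋃ i ∈ I, β i)) :=
      funext fun g => sub_univ_eq_iSup β hβo hβb (ltrans g θ) θ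
    rw [heq]
    exact Measurable.iSup fun I => (meas_ltrans_apply θ (hWm I)).sub measurable_const
  · have heq : (fun g : G => (θ - ltrans g θ) Set.univ)
        = fun g => ⨆ I : Finset ℕ, (θ (⋃ i ∈ I, β i) - ltrans g θ (⋃ i ∈ I, β i)) :=
      funext fun g => sub_univ_eq_iSup β hβo hβb θ (ltrans g θ)
    rw [heq]
    exact Measurable.iSup fun I => measurable_const.sub (meas_ltrans_apply θ (hWm I))

end grp

/-- For all probability measures `m`, `φ`, `θ` on `G`,
`Δ(m, φ * θ) ≤ Δ(m * φ, θ) + Δ(φ, θ)`. -/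
theorem stmt2 {G : Type*} [TopologicalSpace G] [Group G] [IsTopologicalGroup G]
    [LocallyCompactSpace G] [SecondCountableTopology G] [MeasurableSpace G] [BorelSpace G]
    (m φ θ : Measure G) (hm : IsProbabilityMeasure m) (hφ : IsProbabilityMeasure φ)
    (hθ : IsProbabilityMeasure θ) :
    disc m (mconv φ θ) ≤ disc (mconv m φ) θ + disc φ θ := by
  set P := mconv φ θ with hPdef
  haveI : IsProbabilityMeasure P := mconv_prob φ θ
  haveI : IsProbabilityMeasure (mconv m φ) := mconv_prob m φ
  obtain ⟨hM1, hM2⟩ := measE (G := G) θ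
  obtain ⟨hN1, hN2⟩ := measE (G := G) P
  set T : G → ℝ≥0∞ := fun g => (ltrans g θ - θ) Set.univ + (θ - ltrans g θ) Set.univ with hT
  set T' : G → ℝ≥0∞ := fun g => (ltrans g P - P) Set.univ + (P - ltrans g P) Set.univ with hT'
  have hTmeas : Measurable T := hM1.add hM2
  have hT'meas : Measurable T' := hN1.add hN2
  have hsub_le : ∀ (μ ν : Measure G), IsProbabilityMeasure μ → (μ - ν) Set.univ ≤ 1 := by
    intro μ ν hμ
    calc (μ - ν) Set.univ ≤ μ Set.univ := Measure.le_iff'.1 Measure.sub_le _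
      _ = 1 := measure_univ
  have hTle : ∀ g, T g ≤ 2 := by
    intro g
    have h1 := hsub_le (ltrans g θ) θ inferInstance
    have h2 := hsub_le θ (ltrans g θ) inferInstance
    calc T g ≤ 1 + 1 := add_le_add h1 h2
      _ = 2 := one_add_one_eq_two
  have hT'le : ∀ g, T' g ≤ 2 := by
    intro g
    have h1 := hsub_le (ltrans g P) P inferInstance
    have h2 := hsub_le P (ltrans g P) inferInstance
    calc T' g ≤ 1 + 1 := add_le_add h1 h2
      _ = 2 := one_add_one_eq_two
  -- disc as toReal of lintegrals
  have hdiscθ : ∀ (ρ : Measure G), IsProbabilityMeasure ρ →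
      disc ρ θ = (∫⁻ g, T g ∂ρ).toReal := by
    intro ρ hρ
    have : disc ρ θ = ∫ g, (T g).toReal ∂ρ := rfl
    rw [this, integral_toReal hTmeas.aemeasurable]
    exact Filter.Eventually.of_forall fun g => lt_of_le_of_lt (hTle g) (by norm_num)
  have hdiscP : disc m P = (∫⁻ g, T' g ∂m).toReal := by
    have : disc m P = ∫ g, (T' g).toReal ∂m := rfl
    rw [this, integral_toReal hT'meas.aemeasurable]
    exact Filter.Eventually.of_forall fun g => lt_of_le_of_lt (hT'le g) (by norm_num)
  set A := ∫⁻ g, T' g ∂m with hA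
  set B := ∫⁻ g, T g ∂(mconv m φ) with hB
  set C := ∫⁻ g, T g ∂φ with hC
  have hint_le : ∀ (ρ : Measure G), IsProbabilityMeasure ρ → ∫⁻ g, T g ∂ρ ≤ 2 := by
    intro ρ hρ
    calc ∫⁻ g, T g ∂ρ ≤ ∫⁻ _, 2 ∂ρ := lintegral_mono hTle
      _ = 2 := by rw [lintegral_const, measure_univ, mul_one]
  have hBfin : B ≠ ∞ := (lt_of_le_of_lt (hint_le _ inferInstance) (by norm_num)).ne
  have hCfin : C ≠ ∞ := (lt_of_le_of_lt (hint_le _ inferInstance) (by norm_num)).ne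
  set C₀ : ℝ≥0∞ := (P - θ) Set.univ + (θ - P) Set.univ with hC₀def
  have hC₀ : C₀ ≤ C := by
    have h1 := ineq2a φ θ
    have h2 := ineq2b φ θ
    calc C₀ ≤ (∫⁻ h, (ltrans h θ - θ) Set.univ ∂φ) + ∫⁻ h, (θ - ltrans h θ) Set.univ ∂φ :=
          add_le_add h1 h2
      _ = C := (lintegral_add_left hM1 _).symm
  have hpt : ∀ g : G, T' g ≤ (∫⁻ h, T (g * h) ∂φ) + C₀ := by
    intro g
    haveI : IsProbabilityMeasure (ltrans g φ) := ltrans_prob g φ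
    have e1 : (ltrans g P - P) Set.univ
        ≤ (ltrans g P - θ) Set.univ + (θ - P) Set.univ := sub_univ_triangle _ _ _
    have e2 : (P - ltrans g P) Set.univ
        ≤ (P - θ) Set.univ + (θ - ltrans g P) Set.univ := sub_univ_triangle _ _ _
    have hgP : ltrans g P = mconv (ltrans g φ) θ := ltrans_mconv g φ θ
    have e3 : (ltrans g P - θ) Set.univ
        ≤ ∫⁻ h, (ltrans h θ - θ) Set.univ ∂(ltrans g φ) := by
      rw [hgP]; exact ineq2a _ θ
    have e4 : (θ - ltrans g P) Set.univ
        ≤ ∫⁻ h, (θ - ltrans h θ) Set.univ ∂(ltrans g φ) := by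
      rw [hgP]; exact ineq2b _ θ
    have e5 : ∫⁻ h, (ltrans h θ - θ) Set.univ ∂(ltrans g φ)
        = ∫⁻ h, (ltrans (g * h) θ - θ) Set.univ ∂φ := lintegral_ltrans g φ hM1
    have e6 : ∫⁻ h, (θ - ltrans h θ) Set.univ ∂(ltrans g φ)
        = ∫⁻ h, (θ - ltrans (g * h) θ) Set.univ ∂φ := lintegral_ltrans g φ hM2
    have e7 : (∫⁻ h, (ltrans (g * h) θ - θ) Set.univ ∂φ)
          + (∫⁻ h, (θ - ltrans (g * h) θ) Set.univ ∂φ) = ∫⁻ h, T (g * h) ∂φ :=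
      (lintegral_add_left (hM1.comp (measurable_const_mul g)) _).symm
    calc T' g = (ltrans g P - P) Set.univ + (P - ltrans g P) Set.univ := rfl
      _ ≤ ((ltrans g P - θ) Set.univ + (θ - P) Set.univ)
          + ((P - θ) Set.univ + (θ - ltrans g P) Set.univ) := add_le_add e1 e2
      _ = ((ltrans g P - θ) Set.univ + (θ - ltrans g P) Set.univ) + C₀ := by
          rw [hC₀def]; ring
      _ ≤ ((∫⁻ h, (ltrans (g * h) θ - θ) Set.univ ∂φ)
          + (∫⁻ h, (θ - ltrans (g * h) θ) Set.univ ∂φ)) + C₀ :=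
          add_le_add_left (add_le_add (e3.trans e5.le) (e4.trans e6.le)) _
      _ = (∫⁻ h, T (g * h) ∂φ) + C₀ := by rw [e7]
  have hABC : A ≤ B + C := by
    calc A ≤ ∫⁻ g, ((∫⁻ h, T (g * h) ∂φ) + C₀) ∂m := lintegral_mono hpt
      _ = (∫⁻ g, ∫⁻ h, T (g * h) ∂φ ∂m) + C₀ := by
          rw [lintegral_add_right _ measurable_const, lintegral_const, measure_univ, mul_one]
      _ = B + C₀ := by rw [hB, lintegral_mconv m φ hTmeas]
      _ ≤ B + C := add_le_add_right hC₀ _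
  rw [hdiscP, hdiscθ (mconv m φ) inferInstance, hdiscθ φ inferInstance]
  rw [← ENNReal.toReal_add hBfin hCfin]
  exact ENNReal.toReal_mono (by simp [ENNReal.add_ne_top, hBfin, hCfin]) hABC
end

section
/- Let θ be a probability measure on G and let m be a probability measure on G equivalent to λ. Then Δ(m, θ^{*k}) → 0 as k → ∞ if and only if ‖gθ^{*k} − θ^{*k}‖ → 0 as k → ∞ for λ-almost every g ∈ G. -/
open MeasureTheory Filter Topology
open scoped ENNReal NNReal

section Sub
variable {X : Type*} [MeasurableSpace X] (μ ν : Measure X) [IsFiniteMeasure μ] [IsFiniteMeasure ν]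

/-- The measure difference equals the restriction difference on a Hahn set. -/
theorem my_sub_eq_restrict {s : Set X} (hs : MeasurableSet s)
    (h1 : ∀ t, MeasurableSet t → t ⊆ s → ν t ≤ μ t)
    (h2 : ∀ t, MeasurableSet t → t ⊆ sᶜ → μ t ≤ ν t) :
    μ - ν = μ.restrict s - ν.restrict s := by
  have hle : ν.restrict s ≤ μ.restrict s := by
    rw [Measure.le_iff]
    intro t ht
    rw [Measure.restrict_apply ht, Measure.restrict_apply ht]
    exact h1 _ (ht.inter hs) Set.inter_subset_right
  have hd : ∀ t, MeasurableSet t →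
      (μ.restrict s - ν.restrict s) t = μ (t ∩ s) - ν (t ∩ s) := by
    intro t ht
    rw [Measure.sub_apply ht hle, Measure.restrict_apply ht, Measure.restrict_apply ht]
  refine le_antisymm (Measure.sub_le_of_le_add ?_) ?_
  · rw [Measure.le_iff]
    intro t ht
    rw [Measure.add_apply, hd t ht, ← measure_inter_add_diff t hs]
    have h2' : μ (t \ s) ≤ ν (t \ s) := h2 _ (ht.diff hs) (Set.diff_subset_compl t s)
    have : ν t = ν (t ∩ s) + ν (t \ s) := (measure_inter_add_diff t hs).symm
    calc μ (t ∩ s) + μ (t \ s)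
        ≤ (μ (t ∩ s) - ν (t ∩ s) + ν (t ∩ s)) + ν (t \ s) := by
          gcongr; exact le_tsub_add
      _ = μ (t ∩ s) - ν (t ∩ s) + ν t := by rw [add_assoc, ← this]
  · conv_rhs => rw [Measure.sub_def]
    refine le_sInf ?_
    rintro d' hd'
    rw [Measure.le_iff]
    intro t ht
    rw [hd t ht]
    have h1' : μ (t ∩ s) ≤ d' (t ∩ s) + ν (t ∩ s) := Measure.le_iff'.1 hd' (t ∩ s)
    calc μ (t ∩ s) - ν (t ∩ s) ≤ d' (t ∩ s) := tsub_le_iff_right.2 h1'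
      _ ≤ d' t := measure_mono Set.inter_subset_left

theorem my_le_sub_add : μ ≤ (μ - ν) + ν := by
  obtain ⟨s, hs, h1, h2⟩ := hahn_decomposition (μ := μ) (ν := ν)
  rw [my_sub_eq_restrict μ ν hs h1 h2, Measure.le_iff]
  intro t ht
  have hle : ν.restrict s ≤ μ.restrict s := by
    rw [Measure.le_iff]
    intro u hu
    rw [Measure.restrict_apply hu, Measure.restrict_apply hu]
    exact h1 _ (hu.inter hs) Set.inter_subset_right
  rw [Measure.add_apply, Measure.sub_apply ht hle, Measure.restrict_apply ht,
    Measure.restrict_apply ht, ← measure_inter_add_diff t hs]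
  have h2' : μ (t \ s) ≤ ν (t \ s) := h2 _ (ht.diff hs) (Set.diff_subset_compl t s)
  have : ν t = ν (t ∩ s) + ν (t \ s) := (measure_inter_add_diff t hs).symm
  calc μ (t ∩ s) + μ (t \ s)
      ≤ (μ (t ∩ s) - ν (t ∩ s) + ν (t ∩ s)) + ν (t \ s) := by gcongr; exact le_tsub_add
    _ = μ (t ∩ s) - ν (t ∩ s) + ν t := by rw [add_assoc, ← this]

end Sub
section Sup
variable {G : Type*} [TopologicalSpace G] [SecondCountableTopology G] [MeasurableSpace G]
  [BorelSpace G]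

theorem my_exists_basis_seq : ∃ b : ℕ → Set G, (∀ i, IsOpen (b i)) ∧
    ∀ U : Set G, IsOpen U → U = ⋃ i ∈ {i | b i ⊆ U}, b i := by
  have hC := TopologicalSpace.countable_countableBasis G
  obtain ⟨b, hb⟩ := (hC.insert ∅).exists_eq_range (Set.insert_nonempty _ _)
  refine ⟨b, fun i => ?_, fun U hU => ?_⟩
  · have : b i ∈ insert ∅ (TopologicalSpace.countableBasis G) := hb ▸ Set.mem_range_self i
    rcases this with h | h
    · simp [h]
    · exact TopologicalSpace.isOpen_of_mem_countableBasis h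
  · apply Set.Subset.antisymm
    · intro x hx
      obtain ⟨v, hvB, hxv, hvU⟩ :=
        (TopologicalSpace.isBasis_countableBasis G).exists_subset_of_mem_open hx hU
      have : v ∈ Set.range b := hb ▸ Set.mem_insert_of_mem _ hvB
      obtain ⟨i, rfl⟩ := this
      exact Set.mem_biUnion hvU hxv
    · exact Set.iUnion₂_subset fun i hi => hi

theorem my_sub_univ_eq_iSup (α β : Measure G) [IsFiniteMeasure α] [IsFiniteMeasure β]
    [β.OuterRegular] {b : ℕ → Set G} (hbo : ∀ i, IsOpen (b i))
    (hb : ∀ U : Set G, IsOpen U → U = ⋃ i ∈ {i | b i ⊆ U}, b i) :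
    (α - β) Set.univ = ⨆ F : Finset ℕ, (α (⋃ i ∈ F, b i) - β (⋃ i ∈ F, b i)) := by
  classical
  have hmb : ∀ F : Finset ℕ, MeasurableSet (⋃ i ∈ F, b i) := fun F =>
    (isOpen_biUnion fun i _ => hbo i).measurableSet
  refine le_antisymm ?_ (iSup_le fun F => ?_)
  · -- hard direction
    obtain ⟨s, hs, h1, h2⟩ := hahn_decomposition (μ := α) (ν := β)
    have hle : β.restrict s ≤ α.restrict s := by
      rw [Measure.le_iff]
      intro t ht
      rw [Measure.restrict_apply ht, Measure.restrict_apply ht]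
      exact h1 _ (ht.inter hs) Set.inter_subset_right
    rw [my_sub_eq_restrict α β hs h1 h2, Measure.sub_apply MeasurableSet.univ hle,
      Measure.restrict_apply_univ, Measure.restrict_apply_univ]
    -- now : α s - β s ≤ iSup
    have key : ∀ δ : ℝ≥0∞, 0 < δ → δ ≠ ∞ →
        α s - β s ≤ (⨆ F : Finset ℕ, (α (⋃ i ∈ F, b i) - β (⋃ i ∈ F, b i))) + δ + δ + δ := by
      intro δ hδ hδtop
      obtain ⟨U, hsU, hUo, hβU⟩ := Set.exists_isOpen_lt_add s (measure_ne_top β s) hδ.ne'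
      set Fn : ℕ → Finset ℕ := fun n => (Finset.range n).filter (fun i => b i ⊆ U) with hFn
      set W : ℕ → Set G := fun n => ⋃ i ∈ Fn n, b i with hW
      have hWU : ∀ n, W n ⊆ U := by
        intro n
        refine Set.iUnion₂_subset fun i hi => ?_
        exact (Finset.mem_filter.1 hi).2
      have hUW : U = ⋃ n, W n := by
        apply Set.Subset.antisymm
        · intro x hx
          have := hb U hUo
          rw [this] at hx
          obtain ⟨i, hi, hxi⟩ := Set.mem_iUnion₂.1 hx
          refine Set.mem_iUnion.2 ⟨i + 1, ?_⟩
          exact Set.mem_biUnion (Finset.mem_filter.2 ⟨Finset.mem_range.2 (Nat.lt_succ_self i), hi⟩) hxi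
        · exact Set.iUnion_subset hWU
      have hmono : Monotone W := by
        intro n1 n2 h
        have hsub : Fn n1 ⊆ Fn n2 :=
          Finset.filter_subset_filter _ (Finset.range_subset_range.2 h)
        exact Set.iUnion₂_subset fun i hi => Set.subset_biUnion_of_mem (hsub hi)
      have hαU : α U = ⨆ n, α (W n) := by
        rw [hUW]; exact (hmono.directed_le).measure_iUnion
      obtain ⟨n, hn⟩ : ∃ n, α U ≤ α (W n) + δ := by
        by_contra h
        push_neg at h
        have h' : ⨆ n, (α (W n) + δ) ≤ α U := iSup_le fun n => (h n).le
        rw [← ENNReal.iSup_add, ← hαU] at h'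
        exact absurd h' (ENNReal.lt_add_right (measure_ne_top α U) hδ.ne').not_ge
      have c1 : α s - β s ≤ α U - β s := tsub_le_tsub_right (measure_mono hsU) _
      have c2 : α U - β s ≤ (α (W n) - β s) + δ := by
        rw [tsub_le_iff_right]
        calc α U ≤ α (W n) + δ := hn
          _ ≤ (α (W n) - β s + β s) + δ := by gcongr; exact le_tsub_add
          _ = α (W n) - β s + δ + β s := by ring
      have c3 : α (W n) - β s ≤ (α (W n) - β (W n)) + δ := by
        rw [tsub_le_iff_right]
        calc α (W n) ≤ α (W n) - β (W n) + β (W n) := le_tsub_add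
          _ ≤ α (W n) - β (W n) + (β s + δ) := by
              gcongr
              exact le_trans (measure_mono (hWU n)) hβU.le
          _ = α (W n) - β (W n) + δ + β s := by ring
      have c4 : α (W n) - β (W n) ≤ ⨆ F : Finset ℕ, (α (⋃ i ∈ F, b i) - β (⋃ i ∈ F, b i)) :=
        le_iSup (fun F : Finset ℕ => (α (⋃ i ∈ F, b i) - β (⋃ i ∈ F, b i))) (Fn n)
      calc α s - β s ≤ α U - β s := c1
        _ ≤ (α (W n) - β s) + δ := c2
        _ ≤ ((α (W n) - β (W n)) + δ) + δ := by gcongr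
        _ ≤ ((⨆ F : Finset ℕ, (α (⋃ i ∈ F, b i) - β (⋃ i ∈ F, b i))) + δ) + δ := by gcongr
        _ ≤ _ := le_self_add
    refine ENNReal.le_of_forall_pos_le_add fun ε hε _ => ?_
    have h3 : ((ε : ℝ≥0∞) / 3) ≠ ∞ := by
      simp [ENNReal.div_eq_top]
    calc α s - β s ≤ (⨆ F : Finset ℕ, (α (⋃ i ∈ F, b i) - β (⋃ i ∈ F, b i)))
          + (ε : ℝ≥0∞)/3 + (ε : ℝ≥0∞)/3 + (ε : ℝ≥0∞)/3 :=
        key _ (ENNReal.div_pos (by exact_mod_cast hε.ne') (by simp)) h3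
      _ = (⨆ F : Finset ℕ, (α (⋃ i ∈ F, b i) - β (⋃ i ∈ F, b i)))
          + ((ε : ℝ≥0∞)/3 + (ε : ℝ≥0∞)/3 + (ε : ℝ≥0∞)/3) := by ring
      _ = _ := by rw [ENNReal.add_thirds]
  · -- easy direction
    have h := Measure.le_iff'.1 (my_le_sub_add α β) (⋃ i ∈ F, b i)
    rw [Measure.add_apply] at h
    calc α (⋃ i ∈ F, b i) - β (⋃ i ∈ F, b i) ≤ (α - β) (⋃ i ∈ F, b i) :=
        tsub_le_iff_right.2 h
      _ ≤ (α - β) Set.univ := measure_mono (Set.subset_univ _)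
end Sup

section Meas
variable {G : Type*} [TopologicalSpace G] [Group G] [IsTopologicalGroup G]
  [SecondCountableTopology G] [MeasurableSpace G] [BorelSpace G]

theorem my_ltrans_map (g : G) (μ : Measure G) :
    ltrans g μ = Measure.map (Homeomorph.mulLeft g) μ := rfl

instance my_ltrans_finite (g : G) (μ : Measure G) [IsFiniteMeasure μ] :
    IsFiniteMeasure (ltrans g μ) := by
  rw [my_ltrans_map]; infer_instance

theorem my_ltrans_outerRegular (g : G) (μ : Measure G) [μ.OuterRegular] :
    (ltrans g μ).OuterRegular := by
  rw [my_ltrans_map]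
  exact Measure.OuterRegular.map (Homeomorph.mulLeft g) μ

theorem my_ltrans_apply (g : G) (μ : Measure G) {a : Set G} (ha : MeasurableSet a) :
    ltrans g μ a = μ ((fun h => g * h) ⁻¹' a) :=
  Measure.map_apply (measurable_const_mul g) ha

theorem my_meas_ltrans_apply (μ : Measure G) [SFinite μ] {a : Set G} (ha : MeasurableSet a) :
    Measurable fun g => ltrans g μ a := by
  have h : ∀ g : G, ltrans g μ a = μ (Prod.mk g ⁻¹' {p : G × G | p.1 * p.2 ∈ a}) := by
    intro g
    rw [my_ltrans_apply g μ ha]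
    rfl
  simp_rw [h]
  exact measurable_measure_prodMk_left (ha.preimage (measurable_fst.mul measurable_snd))

theorem my_meas_tvE (μ : Measure G) [IsFiniteMeasure μ] :
    Measurable fun g : G =>
      (ltrans g μ - μ) Set.univ + (μ - ltrans g μ) Set.univ := by
  haveI : μ.OuterRegular := inferInstance
  obtain ⟨b, hbo, hb⟩ := my_exists_basis_seq (G := G)
  have hmb : ∀ F : Finset ℕ, MeasurableSet (⋃ i ∈ F, b i) := fun F =>
    (isOpen_biUnion fun i _ => hbo i).measurableSet
  have e1 : ∀ g : G, (ltrans g μ - μ) Set.univ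
      = ⨆ F : Finset ℕ, (ltrans g μ (⋃ i ∈ F, b i) - μ (⋃ i ∈ F, b i)) := fun g =>
    my_sub_univ_eq_iSup (ltrans g μ) μ hbo hb
  have e2 : ∀ g : G, (μ - ltrans g μ) Set.univ
      = ⨆ F : Finset ℕ, (μ (⋃ i ∈ F, b i) - ltrans g μ (⋃ i ∈ F, b i)) := fun g => by
    haveI := my_ltrans_outerRegular g μ
    exact my_sub_univ_eq_iSup μ (ltrans g μ) hbo hb
  simp_rw [e1, e2]
  apply Measurable.add
  · exact Measurable.iSup fun F => (my_meas_ltrans_apply μ (hmb F)).sub measurable_const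
  · exact Measurable.iSup fun F => measurable_const.sub (my_meas_ltrans_apply μ (hmb F))

end Meas

section Conv
variable {G : Type*} [TopologicalSpace G] [Group G] [IsTopologicalGroup G]
  [SecondCountableTopology G] [MeasurableSpace G] [BorelSpace G]

theorem my_mconv_eq (μ ν : Measure G) : mconv μ ν = Measure.mconv μ ν := rfl

theorem my_convPow_prob (θ : Measure G) [IsProbabilityMeasure θ] (k : ℕ) :
    IsProbabilityMeasure (convPow θ k) := by
  induction k with
  | zero => exact (by infer_instance : IsProbabilityMeasure (Measure.dirac (1 : G)))
  | succ k ih =>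
    show IsProbabilityMeasure (mconv θ (convPow θ k))
    rw [my_mconv_eq]
    infer_instance

theorem my_prod_mono_left {μ μ' : Measure G} (ν : Measure G) [SFinite ν] (h : μ ≤ μ') :
    μ.prod ν ≤ μ'.prod ν := by
  rw [Measure.le_iff]
  intro s hs
  rw [Measure.prod_apply hs, Measure.prod_apply hs]
  exact lintegral_mono' h le_rfl

theorem my_mconv_mono_left {μ μ' : Measure G} (ν : Measure G) [SFinite ν] (h : μ ≤ μ') :
    mconv μ ν ≤ mconv μ' ν :=
  Measure.map_mono (my_prod_mono_left ν h) (measurable_fst.mul measurable_snd)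

theorem my_mconv_univ (μ ν : Measure G) [SFinite μ] [SFinite ν] :
    mconv μ ν Set.univ = μ Set.univ * ν Set.univ := by
  unfold mconv
  rw [Measure.map_apply (f := fun p : G × G => p.1 * p.2) (measurable_fst.mul measurable_snd) MeasurableSet.univ,
    Set.preimage_univ, ← Set.univ_prod_univ, Measure.prod_prod]

theorem my_mconv_assoc (μ ν ρ : Measure G) [SFinite μ] [SFinite ν] [SFinite ρ] :
    mconv (mconv μ ν) ρ = mconv μ (mconv ν ρ) := by
  have hm : Measurable fun p : G × G => p.1 * p.2 := measurable_fst.mul measurable_snd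
  unfold mconv
  have l1 : ((μ.prod ν).map (fun p : G × G => p.1 * p.2)).prod ρ
      = ((μ.prod ν).prod ρ).map (Prod.map (fun p : G × G => p.1 * p.2) id) := by
    conv_lhs => rw [← Measure.map_id (μ := ρ)]
    exact Measure.map_prod_map _ _ hm measurable_id
  have l2 : μ.prod ((ν.prod ρ).map (fun p : G × G => p.1 * p.2))
      = (μ.prod (ν.prod ρ)).map (Prod.map id (fun p : G × G => p.1 * p.2)) := by
    conv_lhs => rw [← Measure.map_id (μ := μ)]
    exact Measure.map_prod_map _ _ measurable_id hm
  rw [l1, l2, Measure.map_map hm (hm.prodMap measurable_id),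
    Measure.map_map hm (measurable_id.prodMap hm),
    ← Measure.prodAssoc_prod (μ := μ) (ν := ν) (τ := ρ),
    Measure.map_map (hm.comp (measurable_id.prodMap hm)) MeasurableEquiv.prodAssoc.measurable]
  congr 1
  funext p
  simp [MeasurableEquiv.prodAssoc, mul_assoc]

theorem my_convPow_comm (θ : Measure G) [IsProbabilityMeasure θ] (k : ℕ) :
    mconv θ (convPow θ k) = mconv (convPow θ k) θ := by
  induction k with
  | zero =>
    show mconv θ (Measure.dirac 1) = mconv (Measure.dirac 1) θ
    rw [my_mconv_eq, my_mconv_eq, Measure.mconv_dirac_one, Measure.dirac_one_mconv]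
  | succ k ih =>
    haveI := my_convPow_prob θ k
    show mconv θ (mconv θ (convPow θ k)) = mconv (mconv θ (convPow θ k)) θ
    rw [my_mconv_assoc, ← ih]

theorem my_ltrans_mconv (g : G) (μ ν : Measure G) [SFinite μ] [SFinite ν] :
    ltrans g (mconv μ ν) = mconv (ltrans g μ) ν := by
  have hm : Measurable fun p : G × G => p.1 * p.2 := measurable_fst.mul measurable_snd
  unfold ltrans mconv
  have l1 : (μ.map (fun h => g * h)).prod ν
      = (μ.prod ν).map (Prod.map (fun h => g * h) id) := by
    conv_lhs => rw [← Measure.map_id (μ := ν)]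
    exact Measure.map_prod_map _ _ (measurable_const_mul g) measurable_id
  rw [l1, Measure.map_map (measurable_const_mul g) hm,
    Measure.map_map hm ((measurable_const_mul g).prodMap measurable_id)]
  congr 1
  funext p
  simp [mul_assoc]

theorem my_sub_univ_mconv (α β ν : Measure G) [IsFiniteMeasure α] [IsFiniteMeasure β]
    [IsProbabilityMeasure ν] :
    (mconv α ν - mconv β ν) Set.univ ≤ (α - β) Set.univ := by
  haveI : IsFiniteMeasure (α - β) := isFiniteMeasure_of_le α (Measure.sub_le (μ := α) (ν := β))
  have h1 : mconv α ν ≤ mconv (α - β) ν + mconv β ν := by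
    calc mconv α ν ≤ mconv ((α - β) + β) ν := my_mconv_mono_left ν (my_le_sub_add α β)
      _ = _ := by
          rw [my_mconv_eq, my_mconv_eq, my_mconv_eq, Measure.add_mconv]
  have h2 := Measure.sub_le_of_le_add h1
  calc (mconv α ν - mconv β ν) Set.univ ≤ mconv (α - β) ν Set.univ := Measure.le_iff'.1 h2 _
    _ = (α - β) Set.univ * 1 := by rw [my_mconv_univ, measure_univ (μ := ν)]
    _ = _ := mul_one _

end Conv

section Main
variable {X : Type*} [MeasurableSpace X]

theorem my_main (m : Measure X) [IsProbabilityMeasure m]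
    (e : ℕ → X → ℝ≥0∞) (hmeas : ∀ k, Measurable (e k)) (hle : ∀ k g, e k g ≤ 2)
    (hanti : ∀ g, Antitone fun k => e k g) :
    Tendsto (fun k => ∫ g, (e k g).toReal ∂m) atTop (𝓝 0) ↔
      ∀ᵐ g ∂m, Tendsto (fun k => (e k g).toReal) atTop (𝓝 0) := by
  set E : X → ℝ≥0∞ := fun g => ⨅ k, e k g with hE
  have hE2 : ∀ g, E g ≤ 2 := fun g => le_trans (iInf_le _ 0) (hle 0 g)
  have hEne : ∀ g, E g ≠ ∞ := fun g => (lt_of_le_of_lt (hE2 g) (by norm_num)).ne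
  have htend : ∀ g, Tendsto (fun k => e k g) atTop (𝓝 (E g)) := fun g =>
    tendsto_atTop_iInf (hanti g)
  have hftend : ∀ g, Tendsto (fun k => (e k g).toReal) atTop (𝓝 (E g).toReal) := fun g =>
    (ENNReal.tendsto_toReal (hEne g)).comp (htend g)
  have hnorm : ∀ k g, ‖(e k g).toReal‖ ≤ 2 := fun k g => by
    rw [Real.norm_eq_abs, abs_of_nonneg ENNReal.toReal_nonneg]
    calc (e k g).toReal ≤ (2 : ℝ≥0∞).toReal := ENNReal.toReal_mono (by norm_num) (hle k g)
      _ = 2 := by norm_num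
  have hiff : ∀ g, Tendsto (fun k => (e k g).toReal) atTop (𝓝 0) ↔ (E g).toReal = 0 := by
    intro g
    constructor
    · intro h
      exact tendsto_nhds_unique (hftend g) h
    · intro h
      have := hftend g
      rwa [h] at this
  constructor
  · intro h
    have hint : Tendsto (fun k => ∫ g, (e k g).toReal ∂m) atTop
        (𝓝 (∫ g, (E g).toReal ∂m)) := by
      apply tendsto_integral_of_dominated_convergence (fun _ => (2 : ℝ))
      · exact fun k => ((hmeas k).ennreal_toReal).aestronglyMeasurable
      · exact integrable_const 2
      · exact fun k => Eventually.of_forall fun g => hnorm k g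
      · exact Eventually.of_forall hftend
    have h0 : ∫ g, (E g).toReal ∂m = 0 := tendsto_nhds_unique hint h
    have hInt : Integrable (fun g => (E g).toReal) m := by
      refine Integrable.mono' (integrable_const 2)
        ((Measurable.iInf hmeas).ennreal_toReal).aestronglyMeasurable ?_
      refine Eventually.of_forall fun g => ?_
      rw [Real.norm_eq_abs, abs_of_nonneg ENNReal.toReal_nonneg]
      calc (E g).toReal ≤ (2 : ℝ≥0∞).toReal := ENNReal.toReal_mono (by norm_num) (hE2 g)
        _ = 2 := by norm_num
    have hz : (fun g => (E g).toReal) =ᵐ[m] 0 :=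
      (integral_eq_zero_iff_of_nonneg (fun g => ENNReal.toReal_nonneg) hInt).1 h0
    filter_upwards [hz] with g hg
    exact (hiff g).2 hg
  · intro h
    have hint : Tendsto (fun k => ∫ g, (e k g).toReal ∂m) atTop
        (𝓝 (∫ _g, (0 : ℝ) ∂m)) := by
      apply tendsto_integral_of_dominated_convergence (fun _ => (2 : ℝ))
      · exact fun k => ((hmeas k).ennreal_toReal).aestronglyMeasurable
      · exact integrable_const 2
      · exact fun k => Eventually.of_forall fun g => hnorm k g
      · exact h
    simpa using hint

end Main

/-- For a probability measure `θ` on `G` and a probability measure `m`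
equivalent to the Haar measure `λ`: `Δ(m, θ^{*k}) → 0` as `k → ∞` iff
`‖gθ^{*k} − θ^{*k}‖ → 0` as `k → ∞` for `λ`-almost every `g ∈ G`. -/
theorem stmt7 {G : Type*} [TopologicalSpace G] [Group G] [IsTopologicalGroup G]
    [LocallyCompactSpace G] [SecondCountableTopology G] [MeasurableSpace G] [BorelSpace G]
    (lam : Measure G) (hlam : lam.IsHaarMeasure)
    (θ : Measure G) (hθ : IsProbabilityMeasure θ)
    (m : Measure G) (hm : IsProbabilityMeasure m) (hmlam : m ≪ lam) (hlamm : lam ≪ m) :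
    Tendsto (fun k => disc m (convPow θ k)) atTop (nhds 0) ↔
      ∀ᵐ g ∂lam,
        Tendsto (fun k => tv (ltrans g (convPow θ k)) (convPow θ k)) atTop (nhds 0) := by
  haveI := hθ; haveI := hm
  set e : ℕ → G → ℝ≥0∞ := fun k g =>
    (ltrans g (convPow θ k) - convPow θ k) Set.univ
      + (convPow θ k - ltrans g (convPow θ k)) Set.univ with he
  have htvk : ∀ k (g : G), tv (ltrans g (convPow θ k)) (convPow θ k) = (e k g).toReal :=
    fun k g => rfl
  have hdisc : ∀ k, disc m (convPow θ k) = ∫ g, (e k g).toReal ∂m := fun k => rfl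
  have hmeas : ∀ k, Measurable (e k) := fun k => by
    haveI := my_convPow_prob θ k
    exact my_meas_tvE (convPow θ k)
  have hle : ∀ k (g : G), e k g ≤ 2 := by
    intro k g
    haveI := my_convPow_prob θ k
    haveI : IsProbabilityMeasure (ltrans g (convPow θ k)) :=
      Measure.isProbabilityMeasure_map (measurable_const_mul g).aemeasurable
    have b1 : (ltrans g (convPow θ k) - convPow θ k) Set.univ ≤ 1 := by
      calc (ltrans g (convPow θ k) - convPow θ k) Set.univ
          ≤ ltrans g (convPow θ k) Set.univ := Measure.le_iff'.1 Measure.sub_le _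
        _ = 1 := measure_univ
    have b2 : (convPow θ k - ltrans g (convPow θ k)) Set.univ ≤ 1 := by
      calc (convPow θ k - ltrans g (convPow θ k)) Set.univ
          ≤ (convPow θ k) Set.univ := Measure.le_iff'.1 Measure.sub_le _
        _ = 1 := measure_univ
    calc e k g ≤ 1 + 1 := add_le_add b1 b2
      _ = 2 := one_add_one_eq_two
  have hanti : ∀ g : G, Antitone fun k => e k g := by
    intro g
    apply antitone_nat_of_succ_le
    intro k
    haveI := my_convPow_prob θ k
    have hPsucc : convPow θ (k + 1) = mconv (convPow θ k) θ := by
      show mconv θ (convPow θ k) = mconv (convPow θ k) θ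
      exact my_convPow_comm θ k
    show (ltrans g (convPow θ (k+1)) - convPow θ (k+1)) Set.univ
        + (convPow θ (k+1) - ltrans g (convPow θ (k+1))) Set.univ
      ≤ (ltrans g (convPow θ k) - convPow θ k) Set.univ
        + (convPow θ k - ltrans g (convPow θ k)) Set.univ
    rw [hPsucc, my_ltrans_mconv]
    exact add_le_add (my_sub_univ_mconv _ _ θ) (my_sub_univ_mconv _ _ θ)
  have main := my_main m e hmeas hle hanti
  have hrw : (fun k => disc m (convPow θ k)) = fun k => ∫ g, (e k g).toReal ∂m :=
    funext hdisc
  rw [hrw, main]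
  constructor
  · intro h
    refine (h.filter_mono (Measure.AbsolutelyContinuous.ae_le hlamm)).mono fun g hg => ?_
    rw [funext (fun k => htvk k g)]
    exact hg
  · intro h
    refine (h.filter_mono (Measure.AbsolutelyContinuous.ae_le hmlam)).mono fun g hg => ?_
    rw [← funext (fun k => htvk k g)]
    exact hg
end

section
/- For all systems φ, θ on (G, X) and every probability measure m on G × X, one has Δ(m, φ⊛θ) ≤ Δ(mQ_φ, θ) + Δ(m̄Q_φ, θ). -/
open MeasureTheory Filter Topology

/-- A system on `(G, X)`: a Markov kernel `x ↦ θ^x` from `X` to `G`, i.e. a measurable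
family of Borel probability measures on `G`. -/
def IsSystem {G X : Type*} [MeasurableSpace G] [MeasurableSpace X] (θ : X → Measure G) : Prop :=
  Measurable θ ∧ ∀ x, IsProbabilityMeasure (θ x)

/-- Discrepancy function of a system: `D_θ(g, x) = ‖g θ^{g⁻¹·x} − θ^x‖`. -/
noncomputable def Dsys {G X : Type*} [MeasurableSpace G] [Group G] [MulAction G X]
    (θ : X → Measure G) (p : G × X) : ℝ :=
  tv (ltrans p.1 (θ (p.1⁻¹ • p.2))) (θ p.2)

/-- Convolution of systems: `(θ⊛φ)^x = ∫_G g φ^{g⁻¹·x} dθ^x(g)`. -/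
noncomputable def sconv {G X : Type*} [MeasurableSpace G] [Group G] [MulAction G X]
    (θ φ : X → Measure G) : X → Measure G :=
  fun x => (θ x).bind fun g => ltrans g (φ (g⁻¹ • x))

/-- `k`-fold convolution power `θ^{⊛k}` of a system (with `θ^{⊛0} = δ_1` fibrewise). -/
noncomputable def sconvPow {G X : Type*} [MeasurableSpace G] [Group G] [MulAction G X]
    (θ : X → Measure G) : ℕ → X → Measure G
  | 0 => fun _ => Measure.dirac 1
  | (k + 1) => sconv θ (sconvPow θ k)

/-- Mean discrepancy `Δ(m, θ) = ∫_{G×X} D_θ dm` of a system against a measure on `G × X`. -/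
noncomputable def sdisc {G X : Type*} [MeasurableSpace G] [MeasurableSpace X] [Group G]
    [MulAction G X] (m : Measure (G × X)) (θ : X → Measure G) : ℝ :=
  ∫ p, Dsys θ p ∂m

/-- The measure `mQ_φ` on `G × X`:
`mQ_φ(A) = ∫_{G×X} ∫_G 1_A(g h, x) dφ^{g⁻¹·x}(h) dm(g, x)`. -/
noncomputable def mQ {G X : Type*} [MeasurableSpace G] [MeasurableSpace X] [Group G]
    [MulAction G X] (m : Measure (G × X)) (φ : X → Measure G) : Measure (G × X) :=
  m.bind fun p => (φ (p.1⁻¹ • p.2)).map fun h => (p.1 * h, p.2)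

/-- The measure `m̄Q_φ` on `G × X`:
`m̄Q_φ(A) = ∫_{G×X} ∫_G 1_A(h, x) dφ^{x}(h) dm(g, x)`. -/
noncomputable def mbarQ {G X : Type*} [MeasurableSpace G] [MeasurableSpace X] [Group G]
    (m : Measure (G × X)) (φ : X → Measure G) : Measure (G × X) :=
  m.bind fun p => (φ p.2).map fun h => (h, p.2)

open Set
open scoped symmDiff ENNReal

section MyAux

variable {α : Type*} [MeasurableSpace α]

theorem my_hahn (μ ν : Measure α) [IsFiniteMeasure μ] [IsFiniteMeasure ν] :
    ∃ s : Set α, MeasurableSet s ∧ ν.restrict s ≤ μ.restrict s ∧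
      μ - ν = μ.restrict s - ν.restrict s ∧ μ ≤ (μ - ν) + ν := by
  obtain ⟨s, hs, hpos, hneg⟩ := hahn_decomposition (μ := μ) (ν := ν)
  have hle : ν.restrict s ≤ μ.restrict s := by
    refine Measure.le_iff.2 fun t ht => ?_
    rw [Measure.restrict_apply ht, Measure.restrict_apply ht]
    exact hpos _ (ht.inter hs) inter_subset_right
  set d := μ.restrict s - ν.restrict s with hd
  have hdapp : ∀ t, MeasurableSet t → d t = μ (t ∩ s) - ν (t ∩ s) := by
    intro t ht
    rw [hd, Measure.sub_apply ht hle, Measure.restrict_apply ht, Measure.restrict_apply ht]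
  have hmem : μ ≤ d + ν := by
    refine Measure.le_iff.2 fun t ht => ?_
    have h1 : μ t = μ (t ∩ s) + μ (t \ s) := (measure_inter_add_diff t hs).symm
    have h2 : μ (t ∩ s) = d t + ν (t ∩ s) := by
      rw [hdapp t ht]
      exact (tsub_add_cancel_of_le (hpos _ (ht.inter hs) inter_subset_right)).symm
    have h3 : μ (t \ s) ≤ ν (t \ s) :=
      hneg _ (ht.diff hs) (fun x hx => hx.2)
    calc μ t = d t + ν (t ∩ s) + μ (t \ s) := by rw [h1, h2]
    _ ≤ d t + ν (t ∩ s) + ν (t \ s) := by gcongr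
    _ = d t + ν t := by rw [add_assoc, measure_inter_add_diff t hs]
    _ = (d + ν) t := (Measure.add_apply d ν t).symm
  have hmin : ∀ d' : Measure α, μ ≤ d' + ν → d ≤ d' := by
    intro d' hd'
    refine Measure.le_iff.2 fun t ht => ?_
    rw [hdapp t ht]
    refine le_trans (tsub_le_iff_right.2 ?_) (measure_mono (inter_subset_left (t := s)))
    calc μ (t ∩ s) ≤ (d' + ν) (t ∩ s) := hd' _
    _ = d' (t ∩ s) + ν (t ∩ s) := Measure.add_apply _ _ _
  have heq : μ - ν = d :=
    le_antisymm (Measure.sub_le_of_le_add hmem)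
      (Measure.sub_def ▸ le_sInf fun d' hd' => hmin d' hd')
  exact ⟨s, hs, hle, heq, by rw [heq]; exact hmem⟩

theorem my_sub_univ_biSup {μ ν : Measure α} [IsFiniteMeasure μ] [IsFiniteMeasure ν]
    {𝒜 : Set (Set α)} (h𝒜 : (μ + ν).MeasureDense 𝒜) :
    (μ - ν) Set.univ = ⨆ t ∈ 𝒜, (μ t - ν t) := by
  obtain ⟨s, hs, hle, heq, hadd⟩ := my_hahn μ ν
  refine le_antisymm ?_ ?_
  · have h1 : (μ - ν) Set.univ = μ s - ν s := by
      rw [heq, Measure.sub_apply MeasurableSet.univ hle,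
        Measure.restrict_apply MeasurableSet.univ, Measure.restrict_apply MeasurableSet.univ,
        univ_inter]
    rw [h1]
    refine ENNReal.le_of_forall_pos_le_add fun ε hε _ => ?_
    obtain ⟨t, ht𝒜, ht⟩ := h𝒜.approx s hs (measure_ne_top _ _) ((ε : ℝ) / 2)
      (by positivity)
    have hεhalf : (μ + ν) (s ∆ t) ≤ ENNReal.ofReal ((ε : ℝ) / 2) := ht.le
    have e1 : μ s ≤ μ t + (μ + ν) (s ∆ t) := by
      calc μ s ≤ μ (t ∪ s ∆ t) := measure_mono fun x hx => by
            by_cases hxt : x ∈ t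
            · exact Or.inl hxt
            · exact Or.inr (Or.inl ⟨hx, hxt⟩)
      _ ≤ μ t + μ (s ∆ t) := measure_union_le _ _
      _ ≤ μ t + (μ + ν) (s ∆ t) := by
            gcongr; exact Measure.le_add_right le_rfl
    have e2 : ν t ≤ ν s + (μ + ν) (s ∆ t) := by
      calc ν t ≤ ν (s ∪ s ∆ t) := measure_mono fun x hx => by
            by_cases hxs : x ∈ s
            · exact Or.inl hxs
            · exact Or.inr (Or.inr ⟨hx, hxs⟩)
      _ ≤ ν s + ν (s ∆ t) := measure_union_le _ _
      _ ≤ ν s + (μ + ν) (s ∆ t) := by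
            gcongr; exact Measure.le_add_left le_rfl
    have key : μ s - ν s ≤ (μ t - ν t) + 2 * (μ + ν) (s ∆ t) := by
      rw [tsub_le_iff_right]
      calc μ s ≤ μ t + (μ + ν) (s ∆ t) := e1
      _ ≤ ((μ t - ν t) + ν t) + (μ + ν) (s ∆ t) := by gcongr; exact le_tsub_add
      _ ≤ ((μ t - ν t) + (ν s + (μ + ν) (s ∆ t))) + (μ + ν) (s ∆ t) := by gcongr
      _ = (μ t - ν t) + 2 * (μ + ν) (s ∆ t) + ν s := by ring
    refine key.trans ?_
    have h2 : 2 * (μ + ν) (s ∆ t) ≤ (ε : ℝ≥0∞) := by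
      calc 2 * (μ + ν) (s ∆ t) ≤ 2 * ENNReal.ofReal ((ε : ℝ) / 2) := by gcongr
      _ = ENNReal.ofReal (2 * ((ε : ℝ) / 2)) := by
            rw [ENNReal.ofReal_mul (by norm_num)]; norm_num
      _ = (ε : ℝ≥0∞) := by
            rw [mul_div_cancel₀ _ (by norm_num : (2:ℝ) ≠ 0)]
            exact ENNReal.ofReal_coe_nnreal
    gcongr
    exact le_iSup₂ (f := fun t (_ : t ∈ 𝒜) => μ t - ν t) t ht𝒜
  · refine iSup₂_le fun t ht => ?_
    have htm : MeasurableSet t := h𝒜.measurable t ht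
    have : μ t ≤ (μ - ν) t + ν t := le_trans (hadd t) (le_of_eq (Measure.add_apply _ _ _))
    refine tsub_le_iff_right.2 (this.trans ?_)
    exact add_le_add (measure_mono (subset_univ t)) (le_refl (ν t))

theorem my_measurable_sub_univ {Y : Type*} [MeasurableSpace Y]
    [MeasurableSpace.CountablyGenerated α]
    {κ η : Y → Measure α} (hκ : Measurable κ) (hη : Measurable η)
    (hκf : ∀ y, IsFiniteMeasure (κ y)) (hηf : ∀ y, IsFiniteMeasure (η y)) :
    Measurable fun y => (κ y - η y) Set.univ := by
  set 𝒜 : Set (Set α) :=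
    MeasureTheory.generateSetAlgebra (MeasurableSpace.countableGeneratingSet α) with h𝒜def
  have hgen : ‹MeasurableSpace α› = MeasurableSpace.generateFrom 𝒜 := by
    rw [h𝒜def, generateFrom_generateSetAlgebra_eq,
      MeasurableSpace.generateFrom_countableGeneratingSet]
  have hcount : 𝒜.Countable :=
    countable_generateSetAlgebra (MeasurableSpace.countable_countableGeneratingSet)
  have hrw : ∀ y, (κ y - η y) Set.univ = ⨆ t ∈ 𝒜, (κ y t - η y t) := by
    intro y
    haveI := hκf y; haveI := hηf y
    exact my_sub_univ_biSup
      (Measure.MeasureDense.of_generateFrom_isSetAlgebra_finite (μ := κ y + η y)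
        isSetAlgebra_generateSetAlgebra hgen)
  simp_rw [hrw]
  refine Measurable.biSup 𝒜 hcount fun t ht => ?_
  have htm : MeasurableSet t := hgen ▸ MeasurableSpace.measurableSet_generateFrom ht
  exact ((Measure.measurable_coe htm).comp hκ).sub ((Measure.measurable_coe htm).comp hη)

theorem my_measurable_restrict {Y : Type*} [MeasurableSpace Y] {κ : Y → Measure α}
    (hκ : Measurable κ) {s : Set α} (hs : MeasurableSet s) :
    Measurable fun y => (κ y).restrict s := by
  apply Measure.measurable_of_measurable_coe
  intro t ht
  simp_rw [Measure.restrict_apply ht]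
  exact (Measure.measurable_coe (ht.inter hs)).comp hκ

theorem my_measurable_sub_kernel {Y : Type*} [MeasurableSpace Y]
    [MeasurableSpace.CountablyGenerated α]
    {κ η : Y → Measure α} (hκ : Measurable κ) (hη : Measurable η)
    (hκf : ∀ y, IsFiniteMeasure (κ y)) (hηf : ∀ y, IsFiniteMeasure (η y)) :
    Measurable fun y => (κ y - η y) := by
  apply Measure.measurable_of_measurable_coe
  intro s hs
  have hrw : ∀ y, (κ y - η y) s = ((κ y).restrict s - (η y).restrict s) Set.univ := by
    intro y
    rw [← Measure.restrict_sub_eq_restrict_sub_restrict hs,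
      Measure.restrict_apply MeasurableSet.univ, univ_inter]
  simp_rw [hrw]
  exact my_measurable_sub_univ
    (my_measurable_restrict hκ hs) (my_measurable_restrict hη hs)
    (fun y => by haveI := hκf y; infer_instance) (fun y => by haveI := hηf y; infer_instance)

noncomputable def etv (μ ν : Measure α) : ℝ≥0∞ := (μ - ν) Set.univ + (ν - μ) Set.univ

theorem etv_comm (μ ν : Measure α) : etv μ ν = etv ν μ := add_comm _ _

theorem etv_le_two (μ ν : Measure α) [IsProbabilityMeasure μ] [IsProbabilityMeasure ν] :
    etv μ ν ≤ 2 := by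
  have h1 : (μ - ν) Set.univ ≤ 1 := le_trans (Measure.sub_le _) measure_univ.le
  have h2 : (ν - μ) Set.univ ≤ 1 := le_trans (Measure.sub_le _) measure_univ.le
  calc etv μ ν ≤ 1 + 1 := add_le_add h1 h2
  _ = 2 := one_add_one_eq_two

theorem etv_triangle (μ₁ μ₂ μ₃ : Measure α) [IsFiniteMeasure μ₁] [IsFiniteMeasure μ₂]
    [IsFiniteMeasure μ₃] : etv μ₁ μ₃ ≤ etv μ₁ μ₂ + etv μ₂ μ₃ := by
  have key : ∀ (a b c : Measure α), IsFiniteMeasure a → IsFiniteMeasure b → IsFiniteMeasure c →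
      (a - c) Set.univ ≤ (a - b) Set.univ + (b - c) Set.univ := by
    intro a b c ha hb hc
    have h : a - c ≤ (a - b) + (b - c) := by
      refine Measure.sub_le_of_le_add ?_
      calc a ≤ (a - b) + b := (my_hahn a b).choose_spec.2.2.2
      _ ≤ (a - b) + ((b - c) + c) := by
            gcongr
            exact (my_hahn b c).choose_spec.2.2.2
      _ = (a - b) + (b - c) + c := (add_assoc _ _ _).symm
    exact le_trans (h Set.univ) (le_of_eq (Measure.add_apply _ _ _))
  have k1 := key μ₁ μ₂ μ₃ inferInstance inferInstance inferInstance
  have k2 := key μ₃ μ₂ μ₁ inferInstance inferInstance inferInstance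
  calc etv μ₁ μ₃ ≤ ((μ₁ - μ₂) Set.univ + (μ₂ - μ₃) Set.univ)
      + ((μ₃ - μ₂) Set.univ + (μ₂ - μ₁) Set.univ) := add_le_add k1 k2
  _ = etv μ₁ μ₂ + etv μ₂ μ₃ := by unfold etv; ring

theorem my_measurable_etv {Y : Type*} [MeasurableSpace Y]
    [MeasurableSpace.CountablyGenerated α]
    {κ η : Y → Measure α} (hκ : Measurable κ) (hη : Measurable η)
    (hκf : ∀ y, IsFiniteMeasure (κ y)) (hηf : ∀ y, IsFiniteMeasure (η y)) :
    Measurable fun y => etv (κ y) (η y) :=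
  (my_measurable_sub_univ hκ hη hκf hηf).add (my_measurable_sub_univ hη hκ hηf hκf)

theorem etv_bind_le [MeasurableSpace.CountablyGenerated α] {K : Type*} [MeasurableSpace K]
    {m : Measure K} [IsFiniteMeasure m] {A B : K → Measure α}
    (hA : Measurable A) (hB : Measurable B)
    (hAf : ∀ k, IsProbabilityMeasure (A k)) (hBf : ∀ k, IsProbabilityMeasure (B k)) :
    etv (m.bind A) (m.bind B) ≤ ∫⁻ k, etv (A k) (B k) ∂m := by
  have hAf' : ∀ k, IsFiniteMeasure (A k) := fun k => by haveI := hAf k; infer_instance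
  have hBf' : ∀ k, IsFiniteMeasure (B k) := fun k => by haveI := hBf k; infer_instance
  have key : ∀ (A B : K → Measure α), Measurable A → Measurable B →
      (∀ k, IsFiniteMeasure (A k)) → (∀ k, IsFiniteMeasure (B k)) →
      (m.bind A - m.bind B) Set.univ ≤ ∫⁻ k, (A k - B k) Set.univ ∂m := by
    intro A B hA hB hAf hBf
    have hC : Measurable fun k => A k - B k := my_measurable_sub_kernel hA hB hAf hBf
    have hle : m.bind A ≤ m.bind (fun k => A k - B k) + m.bind B := by
      refine Measure.le_iff.2 fun t ht => ?_
      rw [Measure.add_apply, Measure.bind_apply ht hA.aemeasurable,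
        Measure.bind_apply ht hC.aemeasurable, Measure.bind_apply ht hB.aemeasurable,
        ]
      refine le_trans (lintegral_mono fun k => ?_)
        (le_of_eq (lintegral_add_left ((Measure.measurable_coe ht).comp hC) fun k => B k t))
      haveI := hAf k; haveI := hBf k
      calc A k t ≤ ((A k - B k) + B k) t := (my_hahn (A k) (B k)).choose_spec.2.2.2 t
      _ = (A k - B k) t + B k t := Measure.add_apply _ _ _
    calc (m.bind A - m.bind B) Set.univ
        ≤ (m.bind fun k => A k - B k) Set.univ := Measure.sub_le_of_le_add hle Set.univ
    _ = ∫⁻ k, (A k - B k) Set.univ ∂m :=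
        Measure.bind_apply MeasurableSet.univ hC.aemeasurable
  have h1 := key A B hA hB hAf' hBf'
  have h2 := key B A hB hA hBf' hAf'
  calc etv (m.bind A) (m.bind B)
      ≤ (∫⁻ k, (A k - B k) Set.univ ∂m) + ∫⁻ k, (B k - A k) Set.univ ∂m := add_le_add h1 h2
  _ = ∫⁻ k, etv (A k) (B k) ∂m := by
      unfold etv
      exact (lintegral_add_left (my_measurable_sub_univ hA hB hAf' hBf') _).symm

theorem etv_bind_const_le [MeasurableSpace.CountablyGenerated α] {K : Type*} [MeasurableSpace K]
    {m : Measure K} [IsProbabilityMeasure m] {A : K → Measure α} {ν : Measure α}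
    (hA : Measurable A) (hAf : ∀ k, IsProbabilityMeasure (A k)) [IsProbabilityMeasure ν] :
    etv (m.bind A) ν ≤ ∫⁻ k, etv (A k) ν ∂m := by
  have hconst : m.bind (fun _ => ν) = ν := by
    rw [Measure.bind_const, measure_univ, one_smul]
  calc etv (m.bind A) ν = etv (m.bind A) (m.bind fun _ => ν) := by rw [hconst]
  _ ≤ ∫⁻ k, etv (A k) ν ∂m :=
      etv_bind_le hA measurable_const hAf (fun _ => inferInstance)

open ProbabilityTheory in
theorem my_measurable_lintegral_kernel {Y B : Type*} [MeasurableSpace Y] [MeasurableSpace B]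
    {μ : Y → Measure B} (hμ : Measurable μ) (hμp : ∀ y, IsProbabilityMeasure (μ y))
    {f : Y → B → ℝ≥0∞} (hf : Measurable fun p : Y × B => f p.1 p.2) :
    Measurable fun y => ∫⁻ b, f y b ∂(μ y) := by
  let κ : Kernel Y B := ⟨μ, hμ⟩
  haveI : IsMarkovKernel κ := ⟨fun y => hμp y⟩
  exact Measurable.lintegral_kernel_prod_right' (κ := κ) hf

theorem my_measurable_map_kernel {Y B Z : Type*} [MeasurableSpace Y] [MeasurableSpace B]
    [MeasurableSpace Z]
    {μ : Y → Measure B} (hμ : Measurable μ) (hμp : ∀ y, IsProbabilityMeasure (μ y))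
    {e : Y → B → Z} (he : Measurable fun p : Y × B => e p.1 p.2) :
    Measurable fun y => (μ y).map (e y) := by
  have hey : ∀ y, Measurable (e y) := fun y => he.comp measurable_prodMk_left
  apply Measure.measurable_of_measurable_coe
  intro s hs
  have hrw : ∀ y, (μ y).map (e y) s = ∫⁻ b, s.indicator (fun _ => (1 : ℝ≥0∞)) (e y b) ∂(μ y) := by
    intro y
    rw [Measure.map_apply (hey y) hs, ← lintegral_indicator_one ((hey y) hs)]
    refine lintegral_congr fun b => ?_
    by_cases hb : e y b ∈ s <;> simp [Set.indicator_apply, hb]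
  simp_rw [hrw]
  exact my_measurable_lintegral_kernel hμ hμp
    (((measurable_one (α := ℝ≥0∞)).indicator hs).comp he)

theorem my_measurable_bind_kernel {Y B Z : Type*} [MeasurableSpace Y] [MeasurableSpace B]
    [MeasurableSpace Z]
    {μ : Y → Measure B} (hμ : Measurable μ) (hμp : ∀ y, IsProbabilityMeasure (μ y))
    {A : Y → B → Measure Z} (hA : Measurable fun p : Y × B => A p.1 p.2) :
    Measurable fun y => (μ y).bind (A y) := by
  have hAy : ∀ y, Measurable (A y) := fun y => hA.comp measurable_prodMk_left
  apply Measure.measurable_of_measurable_coe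
  intro s hs
  simp_rw [fun y => Measure.bind_apply hs (hAy y).aemeasurable]
  exact my_measurable_lintegral_kernel hμ hμp ((Measure.measurable_coe hs).comp hA)

theorem my_isProbabilityMeasure_bind {K B : Type*} [MeasurableSpace K] [MeasurableSpace B]
    {m : Measure K} [IsProbabilityMeasure m] {A : K → Measure B} (hA : Measurable A)
    (hAp : ∀ k, IsProbabilityMeasure (A k)) : IsProbabilityMeasure (m.bind A) := by
  constructor
  rw [Measure.bind_apply MeasurableSet.univ hA.aemeasurable]
  simp [measure_univ]


end MyAux

/-- For all systems `φ`, `θ` on `(G, X)` and every probability measure `m`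
on `G × X`, `Δ(m, φ⊛θ) ≤ Δ(mQ_φ, θ) + Δ(m̄Q_φ, θ)`. -/
theorem stmt10 {G X : Type*} [TopologicalSpace G] [Group G] [IsTopologicalGroup G]
    [LocallyCompactSpace G] [SecondCountableTopology G] [MeasurableSpace G] [BorelSpace G]
    [MeasurableSpace X] [StandardBorelSpace X] [MulAction G X] [MeasurableSMul₂ G X]
    (φ θ : X → Measure G) (hφ : IsSystem φ) (hθ : IsSystem θ)
    (m : Measure (G × X)) (hm : IsProbabilityMeasure m) :
    sdisc m (sconv φ θ) ≤ sdisc (mQ m φ) θ + sdisc (mbarQ m φ) θ := by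
  classical
  obtain ⟨hφm, hφp⟩ := hφ
  obtain ⟨hθm, hθp⟩ := hθ
  -- basic measurability facts
  have hmul : Measurable fun p : G × G => p.1 * p.2 := continuous_mul.measurable
  have hml : ∀ g : G, Measurable fun h : G => g * h :=
    fun g => (continuous_const.mul continuous_id).measurable
  have hinvx : Measurable fun p : G × X => p.1⁻¹ • p.2 :=
    Measurable.smul (continuous_inv.measurable.comp measurable_fst) measurable_snd
  -- the kernel `Θ (g, x) = g θ^{g⁻¹ x}` and its `X × G` variant used for `sconv`
  have hΘ : Measurable fun p : G × X => ltrans p.1 (θ (p.1⁻¹ • p.2)) := by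
    unfold ltrans
    exact my_measurable_map_kernel (hθm.comp hinvx) (fun p => hθp _)
      (hmul.comp ((measurable_fst.comp measurable_fst).prodMk measurable_snd))
  have hΘp : ∀ p : G × X, IsProbabilityMeasure (ltrans p.1 (θ (p.1⁻¹ • p.2))) := by
    intro p
    haveI := hθp (p.1⁻¹ • p.2)
    exact Measure.isProbabilityMeasure_map (hml p.1).aemeasurable
  have hAx : ∀ x : X, Measurable fun k : G => ltrans k (θ (k⁻¹ • x)) := by
    intro x
    unfold ltrans
    exact my_measurable_map_kernel
      (μ := fun k : G => θ (k⁻¹ • x))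
      (hθm.comp (Measurable.smul continuous_inv.measurable measurable_const))
      (fun k => hθp _) hmul
  have hAxp : ∀ (x : X) (k : G), IsProbabilityMeasure (ltrans k (θ (k⁻¹ • x))) :=
    fun x k => hΘp (k, x)
  -- measurability of `sconv φ θ`
  have hsconvm : Measurable (sconv φ θ) := by
    unfold sconv
    refine my_measurable_bind_kernel hφm hφp (A := fun x g => ltrans g (θ (g⁻¹ • x))) ?_
    have : Measurable fun p : X × G => ltrans p.2 (θ (p.2⁻¹ • p.1)) := by
      unfold ltrans
      exact my_measurable_map_kernel
        (μ := fun p : X × G => θ (p.2⁻¹ • p.1))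
        (hθm.comp (Measurable.smul (continuous_inv.measurable.comp measurable_snd)
          measurable_fst))
        (fun p => hθp _)
        (hmul.comp ((measurable_snd.comp measurable_fst).prodMk measurable_snd))
    exact this
  have hsconvp : ∀ x, IsProbabilityMeasure (sconv φ θ x) := by
    intro x
    haveI := hφp x
    exact my_isProbabilityMeasure_bind (hAx x) (hAxp x)
  -- the ENNReal-valued discrepancy functions
  set eD : G × X → ℝ≥0∞ := fun p => etv (ltrans p.1 (θ (p.1⁻¹ • p.2))) (θ p.2) with heDdef
  set eDs : G × X → ℝ≥0∞ :=
    fun p => etv (ltrans p.1 (sconv φ θ (p.1⁻¹ • p.2))) (sconv φ θ p.2) with heDsdef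
  have hθf : ∀ x, IsFiniteMeasure (θ x) := fun x => by haveI := hθp x; infer_instance
  have heD : Measurable eD :=
    my_measurable_etv hΘ (hθm.comp measurable_snd)
      (fun p => by haveI := hΘp p; infer_instance) (fun p => hθf _)
  have hΘs : Measurable fun p : G × X => ltrans p.1 (sconv φ θ (p.1⁻¹ • p.2)) := by
    unfold ltrans
    exact my_measurable_map_kernel (hsconvm.comp hinvx) (fun p => hsconvp _)
      (hmul.comp ((measurable_fst.comp measurable_fst).prodMk measurable_snd))
  have hΘsp : ∀ p : G × X, IsProbabilityMeasure (ltrans p.1 (sconv φ θ (p.1⁻¹ • p.2))) := by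
    intro p
    haveI := hsconvp (p.1⁻¹ • p.2)
    exact Measure.isProbabilityMeasure_map (hml p.1).aemeasurable
  have heDs : Measurable eDs :=
    my_measurable_etv hΘs (hsconvm.comp measurable_snd)
      (fun p => by haveI := hΘsp p; infer_instance)
      (fun p => by haveI := hsconvp p.2; infer_instance)
  have heDle : ∀ p, eD p ≤ 2 := by
    intro p
    haveI := hΘp p; haveI := hθp p.2
    exact etv_le_two _ _
  have heDsle : ∀ p, eDs p ≤ 2 := by
    intro p
    haveI := hΘsp p; haveI := hsconvp p.2
    exact etv_le_two _ _
  -- the two comparison functions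
  set F₁ : G × X → ℝ≥0∞ := fun p => ∫⁻ h, eD (p.1 * h, p.2) ∂(φ (p.1⁻¹ • p.2)) with hF₁def
  set F₂ : G × X → ℝ≥0∞ := fun p => ∫⁻ h, eD (h, p.2) ∂(φ p.2) with hF₂def
  have hF₁m : Measurable F₁ :=
    my_measurable_lintegral_kernel (hφm.comp hinvx) (fun p => hφp _)
      (heD.comp ((hmul.comp ((measurable_fst.comp measurable_fst).prodMk
        measurable_snd)).prodMk (measurable_snd.comp measurable_fst)))
  have hF₂m : Measurable F₂ :=
    my_measurable_lintegral_kernel (μ := fun p : G × X => φ p.2) (hφm.comp measurable_snd)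
      (fun p : G × X => hφp p.2)
      (heD.comp (measurable_snd.prodMk (measurable_snd.comp measurable_fst)))
  have hF₁le : ∀ p, F₁ p ≤ 2 := by
    intro p
    haveI := hφp (p.1⁻¹ • p.2)
    calc F₁ p ≤ ∫⁻ _, 2 ∂(φ (p.1⁻¹ • p.2)) := lintegral_mono fun h => heDle _
    _ = 2 := by simp [measure_univ]
  have hF₂le : ∀ p, F₂ p ≤ 2 := by
    intro p
    haveI := hφp p.2
    calc F₂ p ≤ ∫⁻ _, 2 ∂(φ p.2) := lintegral_mono fun h => heDle _
    _ = 2 := by simp [measure_univ]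
  -- pointwise key inequality
  have P1 : ∀ p : G × X, eDs p ≤ F₁ p + F₂ p := by
    rintro ⟨g, x⟩
    haveI := hφp (g⁻¹ • x); haveI := hφp x; haveI := hθp x
    set β : Measure G := ltrans g (φ (g⁻¹ • x)) with hβdef
    set A : G → Measure G := fun k => ltrans k (θ (k⁻¹ • x)) with hAdef
    haveI hβp : IsProbabilityMeasure β := Measure.isProbabilityMeasure_map (hml g).aemeasurable
    have hA : Measurable A := hAx x
    have hAp : ∀ k, IsProbabilityMeasure (A k) := hAxp x
    -- step 0 : `g (φ⊛θ)^{g⁻¹x} = (gφ^{g⁻¹x}).bind A`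
    have step0 : ltrans g (sconv φ θ (g⁻¹ • x)) = β.bind A := by
      ext s hs
      have hpre : MeasurableSet ((fun h => g * h) ⁻¹' s) := (hml g) hs
      have hfm : Measurable fun k : G => A k s := (Measure.measurable_coe hs).comp hA
      rw [hβdef, ltrans, ltrans, Measure.map_apply (hml g) hs, sconv,
        Measure.bind_apply hpre (hAx (g⁻¹ • x)).aemeasurable,
        Measure.bind_apply hs hA.aemeasurable,
        lintegral_map hfm (hml g)]
      refine lintegral_congr fun k => ?_
      rw [hAdef]
      simp only []
      rw [ltrans, ltrans, Measure.map_apply (hml k) hpre, Measure.map_apply (hml (g * k)) hs]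
      have h1 : k⁻¹ • g⁻¹ • x = (g * k)⁻¹ • x := by rw [smul_smul, mul_inv_rev]
      have h2 : (fun h => k * h) ⁻¹' ((fun h => g * h) ⁻¹' s) =
          (fun h => (g * k) * h) ⁻¹' s := by
        ext h; simp [Set.mem_preimage, mul_assoc]
      rw [h1, h2]
    have hsx : sconv φ θ x = (φ x).bind A := rfl
    haveI hb1 : IsProbabilityMeasure (β.bind A) := my_isProbabilityMeasure_bind hA hAp
    haveI hb2 : IsProbabilityMeasure ((φ x).bind A) := my_isProbabilityMeasure_bind hA hAp
    have hfk : Measurable fun k : G => etv (A k) (θ x) :=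
      my_measurable_etv hA measurable_const
        (fun k => by haveI := hAp k; infer_instance) (fun _ => hθf x)
    have bound1 : etv (β.bind A) (θ x) ≤ F₁ (g, x) := by
      calc etv (β.bind A) (θ x) ≤ ∫⁻ k, etv (A k) (θ x) ∂β := etv_bind_const_le hA hAp
      _ = ∫⁻ h, etv (A (g * h)) (θ x) ∂(φ (g⁻¹ • x)) := by
          rw [hβdef, ltrans, lintegral_map hfk (hml g)]
      _ = F₁ (g, x) := rfl
    have bound2 : etv (θ x) ((φ x).bind A) ≤ F₂ (g, x) := by
      rw [etv_comm]
      calc etv ((φ x).bind A) (θ x) ≤ ∫⁻ k, etv (A k) (θ x) ∂(φ x) := etv_bind_const_le hA hAp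
      _ = F₂ (g, x) := rfl
    calc eDs (g, x) = etv (β.bind A) ((φ x).bind A) := by
          rw [heDsdef]; simp only []; rw [step0, hsx]
    _ ≤ etv (β.bind A) (θ x) + etv (θ x) ((φ x).bind A) := etv_triangle _ _ _
    _ ≤ F₁ (g, x) + F₂ (g, x) := add_le_add bound1 bound2
  -- identification of the two integrals
  have hκ₁ : Measurable fun p : G × X => (φ (p.1⁻¹ • p.2)).map fun h => (p.1 * h, p.2) :=
    my_measurable_map_kernel (hφm.comp hinvx) (fun p => hφp _)
      ((hmul.comp ((measurable_fst.comp measurable_fst).prodMk measurable_snd)).prodMk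
        (measurable_snd.comp measurable_fst))
  have hκ₂ : Measurable fun p : G × X => (φ p.2).map fun h => (h, p.2) :=
    my_measurable_map_kernel (μ := fun p : G × X => φ p.2) (hφm.comp measurable_snd)
      (fun p : G × X => hφp p.2)
      (measurable_snd.prodMk (measurable_snd.comp measurable_fst))
  have LQ1 : ∫⁻ p, eD p ∂(mQ m φ) = ∫⁻ p, F₁ p ∂m := by
    rw [mQ, Measure.lintegral_bind hκ₁.aemeasurable heD.aemeasurable]
    refine lintegral_congr fun p => ?_
    have hgm : Measurable fun h : G => (p.1 * h, p.2) := (hml p.1).prodMk measurable_const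
    rw [lintegral_map heD hgm]
  have LQ2 : ∫⁻ p, eD p ∂(mbarQ m φ) = ∫⁻ p, F₂ p ∂m := by
    rw [mbarQ, Measure.lintegral_bind hκ₂.aemeasurable heD.aemeasurable]
    refine lintegral_congr fun p => ?_
    have hgm : Measurable fun h : G => (h, p.2) := measurable_id.prodMk measurable_const
    rw [lintegral_map heD hgm]
  -- rewriting the three `sdisc`s via lintegrals
  have e0 : sdisc m (sconv φ θ) = (∫⁻ p, eDs p ∂m).toReal := by
    rw [sdisc, ← integral_toReal heDs.aemeasurable
      (ae_of_all _ fun p => lt_of_le_of_lt (heDsle p) (by norm_num))]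
    rfl
  have e1 : sdisc (mQ m φ) θ = (∫⁻ p, eD p ∂(mQ m φ)).toReal := by
    rw [sdisc, ← integral_toReal heD.aemeasurable
      (ae_of_all _ fun p => lt_of_le_of_lt (heDle p) (by norm_num))]
    rfl
  have e2 : sdisc (mbarQ m φ) θ = (∫⁻ p, eD p ∂(mbarQ m φ)).toReal := by
    rw [sdisc, ← integral_toReal heD.aemeasurable
      (ae_of_all _ fun p => lt_of_le_of_lt (heDle p) (by norm_num))]
    rfl
  -- finiteness of the right-hand side
  have hne1 : ∫⁻ p, F₁ p ∂m ≠ ⊤ := by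
    refine ne_top_of_le_ne_top ?_ (lintegral_mono fun p => hF₁le p)
    simp [measure_univ]
  have hne2 : ∫⁻ p, F₂ p ∂m ≠ ⊤ := by
    refine ne_top_of_le_ne_top ?_ (lintegral_mono fun p => hF₂le p)
    simp [measure_univ]
  -- final chain
  have hmono : ∫⁻ p, eDs p ∂m ≤ (∫⁻ p, F₁ p ∂m) + ∫⁻ p, F₂ p ∂m := by
    calc ∫⁻ p, eDs p ∂m ≤ ∫⁻ p, (F₁ p + F₂ p) ∂m := lintegral_mono P1
    _ = (∫⁻ p, F₁ p ∂m) + ∫⁻ p, F₂ p ∂m := lintegral_add_left hF₁m _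
  rw [e0, e1, e2, LQ1, LQ2]
  calc (∫⁻ p, eDs p ∂m).toReal
      ≤ ((∫⁻ p, F₁ p ∂m) + ∫⁻ p, F₂ p ∂m).toReal :=
        ENNReal.toReal_mono (by exact ENNReal.add_ne_top.2 ⟨hne1, hne2⟩) hmono
  _ = (∫⁻ p, F₁ p ∂m).toReal + (∫⁻ p, F₂ p ∂m).toReal := ENNReal.toReal_add hne1 hne2
end

section
/- Let φ be an absolutely continuous system on (G, X) (i.e., φ^x ≺ λ for every x ∈ X) and let m be a probability measure on G × X with m ≺ λ ⊗ κ. Then mQ_φ ≺ λ ⊗ κ and m̄Q_φ ≺ λ ⊗ κ. -/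
open MeasureTheory Filter Topology

open ProbabilityTheory in
lemma key_ac {G X : Type*} [MeasurableSpace G] [MeasurableSpace X]
    (lam : Measure G) [SigmaFinite lam] (κ : Measure X) [SigmaFinite κ]
    (φ : X → Measure G) (hφm : Measurable φ) (hφp : ∀ x, IsProbabilityMeasure (φ x))
    (hφac : ∀ x, φ x ≪ lam)
    (m : Measure (G × X)) (hmac : m ≪ lam.prod κ)
    (σ : G × X → X) (hσ : Measurable σ)
    (f : G × X → G → G)
    (hf : Measurable (fun q : (G × X) × G => (f q.1 q.2, q.1.2)))
    (hinv : ∀ (p : G × X) (A : Set G), MeasurableSet A → lam A = 0 →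
      lam {h | f p h ∈ A} = 0) :
    (m.bind fun p => (φ (σ p)).map fun h => (f p h, p.2)) ≪ lam.prod κ := by
  intro s hs0
  obtain ⟨t, hst, htm, ht0⟩ := exists_measurable_superset_of_null hs0
  have hfp : ∀ p : G × X, Measurable fun h => (f p h, p.2) := fun p =>
    hf.comp (measurable_prodMk_left (m := inferInstance))
  -- measurability of the kernel
  have hkm : Measurable fun p => (φ (σ p)).map fun h => (f p h, p.2) := by
    apply Measure.measurable_of_measurable_coe
    intro u hu
    have : (fun p => ((φ (σ p)).map fun h => (f p h, p.2)) u)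
        = fun p => ∫⁻ h, u.indicator (fun _ => (1 : ENNReal)) (f p h, p.2) ∂ (φ (σ p)) := by
      funext p
      rw [Measure.map_apply (hfp p) hu]
      rw [← lintegral_indicator_one (MeasurableSet.preimage hu (hfp p))]
      rfl
    rw [this]
    let k : Kernel (G × X) G := ⟨fun p => φ (σ p), hφm.comp hσ⟩
    haveI : IsMarkovKernel k := ⟨fun p => hφp (σ p)⟩
    exact Measurable.lintegral_kernel_prod_right (κ := k)
      (f := fun p h => u.indicator (fun _ => (1 : ENNReal)) (f p h, p.2))
      ((measurable_const.indicator hu).comp hf)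
  -- sections of t are lam-null for κ-a.e. x
  have hswap : (κ.prod lam) (Prod.swap ⁻¹' t) = 0 := by
    rw [← Measure.prod_swap, Measure.map_apply measurable_swap (htm.preimage measurable_swap)]
    simpa [Set.preimage_preimage] using ht0
  have hsect : ∀ᵐ x ∂κ, lam {u | (u, x) ∈ t} = 0 := by
    have := (Measure.measure_prod_null (μ := κ) (ν := lam)
      (htm.preimage measurable_swap)).mp hswap
    filter_upwards [this] with x hx
    simpa [Set.preimage] using hx
  obtain ⟨N, hNsub, hNm, hN0⟩ :=
    exists_measurable_superset_of_null (ae_iff.mp hsect)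
  have hmN : m (Set.univ ×ˢ N) = 0 := by
    apply hmac
    rw [Measure.prod_prod, hN0, mul_zero]
  have hae : ∀ᵐ p ∂m, ((φ (σ p)).map fun h => (f p h, p.2)) t = 0 := by
    have : ∀ᵐ p ∂m, p ∉ Set.univ ×ˢ N := measure_eq_zero_iff_ae_notMem.mp hmN
    filter_upwards [this] with p hp
    have hx : p.2 ∉ N := fun h => hp ⟨Set.mem_univ _, h⟩
    have hx' : lam {u | (u, p.2) ∈ t} = 0 := by
      by_contra hc
      exact hx (hNsub hc)
    have hAm : MeasurableSet {u | (u, p.2) ∈ t} :=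
      htm.preimage (measurable_id.prodMk measurable_const)
    have h0 : lam {h | f p h ∈ {u | (u, p.2) ∈ t}} = 0 := hinv p _ hAm hx'
    rw [Measure.map_apply (hfp p) htm]
    exact hφac (σ p) h0
  refine measure_mono_null hst ?_
  calc (m.bind fun p => (φ (σ p)).map fun h => (f p h, p.2)) t
      = ∫⁻ p, ((φ (σ p)).map fun h => (f p h, p.2)) t ∂m :=
        Measure.bind_apply htm hkm.aemeasurable
    _ = ∫⁻ _, 0 ∂m := lintegral_congr_ae hae
    _ = 0 := lintegral_zero

/-- If `φ` is an absolutely continuous system on `(G, X)` (i.e. `φ^x ≺ λ`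
for every `x`) and `m` is a probability measure on `G × X` with `m ≺ λ ⊗ κ`, then
`mQ_φ ≺ λ ⊗ κ` and `m̄Q_φ ≺ λ ⊗ κ`. -/
theorem stmt11 {G X : Type*} [TopologicalSpace G] [Group G] [IsTopologicalGroup G]
    [LocallyCompactSpace G] [SecondCountableTopology G] [MeasurableSpace G] [BorelSpace G]
    [MeasurableSpace X] [StandardBorelSpace X] [MulAction G X] [MeasurableSMul₂ G X]
    (lam : Measure G) (hlam : lam.IsHaarMeasure)
    (κ : Measure X) (hκ : SigmaFinite κ)
    (φ : X → Measure G) (hφ : IsSystem φ) (hφac : ∀ x, φ x ≪ lam)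
    (m : Measure (G × X)) (hm : IsProbabilityMeasure m) (hmac : m ≪ lam.prod κ) :
    mQ m φ ≪ lam.prod κ ∧ mbarQ m φ ≪ lam.prod κ := by
  haveI := hlam
  haveI := hκ
  haveI : SigmaFinite lam := inferInstance
  haveI : lam.IsMulLeftInvariant := hlam.toIsMulLeftInvariant
  constructor
  · exact key_ac lam κ φ hφ.1 hφ.2 hφac m hmac
      (fun p => p.1⁻¹ • p.2) (measurable_fst.inv.smul measurable_snd)
      (fun p h => p.1 * h)
      ((measurable_fst.fst.mul measurable_snd).prodMk measurable_fst.snd)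
      (fun p A hAm hA0 => by
        have : {h | p.1 * h ∈ A} = (fun h => p.1 * h) ⁻¹' A := rfl
        rw [this, measure_preimage_mul]
        exact hA0)
  · exact key_ac lam κ φ hφ.1 hφ.2 hφac m hmac
      (fun p => p.2) measurable_snd
      (fun _ h => h)
      (measurable_snd.prodMk measurable_fst.snd)
      (fun p A hAm hA0 => hA0)
end

section
/- Let θ be a system on (G, X) and let m be a probability measure on G × X equivalent to λ ⊗ κ. Then Δ(m, θ^{⊛k}) → 0 as k → ∞ if and only if D_{θ^{⊛k}}(g, x) → 0 as k → ∞ for (λ ⊗ κ)-almost every (g, x) ∈ G × X. -/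
open MeasureTheory Filter Topology

section Stmt16Aux

open MeasureTheory ProbabilityTheory Filter Topology ENNReal

/-! ### Measure subtraction and `withDensity` -/

lemma wd_sub_wd {α : Type*} [MeasurableSpace α] (ρ : Measure α) {f g : α → ℝ≥0∞}
    (hf : Measurable f) (hg : Measurable g) (hgfin : ∫⁻ a, g a ∂ρ ≠ ∞) :
    ρ.withDensity f - ρ.withDensity g = ρ.withDensity (f - g) := by
  refine le_antisymm (Measure.sub_le_of_le_add ?_) ?_
  · rw [← withDensity_add_right _ hg]
    exact withDensity_mono (Filter.Eventually.of_forall fun a => le_tsub_add)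
  · rw [Measure.sub_def]
    refine le_sInf fun d hd => ?_
    rw [Set.mem_setOf_eq] at hd
    rw [Measure.le_iff]
    intro A hA
    have hS : MeasurableSet {a | g a ≤ f a} := measurableSet_le hg hf
    set B := A ∩ {a | g a ≤ f a} with hBdef
    have hBm : MeasurableSet B := hA.inter hS
    have hzero : ρ.withDensity (f - g) (A \ {a | g a ≤ f a}) = 0 := by
      rw [withDensity_apply _ (hA.diff hS)]
      have hzz : ∫⁻ a in A \ {a | g a ≤ f a}, (f - g) a ∂ρ
          = ∫⁻ a in A \ {a | g a ≤ f a}, 0 ∂ρ :=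
        setLIntegral_congr_fun (hA.diff hS)
          (fun x hx =>
            tsub_eq_zero_of_le (le_of_not_ge hx.2))
      rw [hzz, lintegral_zero]
    have hsplit : ρ.withDensity (f - g) A = ρ.withDensity (f - g) B :=
      by rw [← measure_inter_add_diff A hS, ← hBdef, hzero, add_zero]
    have hgB : ∫⁻ a in B, g a ∂ρ ≠ ∞ :=
      ne_top_of_le_ne_top hgfin (setLIntegral_le_lintegral _ _)
    have hle : g ≤ᵐ[ρ.restrict B] f := by
      filter_upwards [ae_restrict_mem hBm] with x hx using hx.2
    have hsub : ∫⁻ a in B, (f - g) a ∂ρ = ∫⁻ a in B, f a ∂ρ - ∫⁻ a in B, g a ∂ρ := by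
      simpa [Pi.sub_apply] using lintegral_sub hg hgB hle
    have hdA : ρ.withDensity f B ≤ d B + ρ.withDensity g B := by
      simpa using Measure.le_iff'.mp hd B
    calc ρ.withDensity (f - g) A = ρ.withDensity (f - g) B := hsplit
      _ = ∫⁻ a in B, (f - g) a ∂ρ := withDensity_apply _ hBm
      _ = ρ.withDensity f B - ρ.withDensity g B := by
          rw [hsub, withDensity_apply _ hBm, withDensity_apply _ hBm]
      _ ≤ d B := tsub_le_iff_right.mpr hdA
      _ ≤ d A := measure_mono Set.inter_subset_left

lemma Measure.le_sub_add' {α : Type*} [MeasurableSpace α] (μ ν : Measure α)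
    [IsFiniteMeasure μ] [IsFiniteMeasure ν] : μ ≤ μ - ν + ν := by
  set ρ : Measure α := μ + ν with hρ
  have hμac : μ ≪ ρ := Measure.absolutelyContinuous_of_le (Measure.le_add_right le_rfl)
  have hνac : ν ≪ ρ := Measure.absolutelyContinuous_of_le (Measure.le_add_left le_rfl)
  have hμ : ρ.withDensity (μ.rnDeriv ρ) = μ := Measure.withDensity_rnDeriv_eq _ _ hμac
  have hν : ρ.withDensity (ν.rnDeriv ρ) = ν := Measure.withDensity_rnDeriv_eq _ _ hνac
  have hνfin : ∫⁻ a, ν.rnDeriv ρ a ∂ρ ≠ ∞ := (Measure.lintegral_rnDeriv_lt_top ν ρ).ne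
  have hsub : μ - ν = ρ.withDensity (μ.rnDeriv ρ - ν.rnDeriv ρ) := by
    rw [← hμ, ← hν, wd_sub_wd ρ (Measure.measurable_rnDeriv _ _)
      (Measure.measurable_rnDeriv _ _) hνfin]
    rw [hμ, hν]
  calc μ = ρ.withDensity (μ.rnDeriv ρ) := hμ.symm
    _ ≤ ρ.withDensity ((μ.rnDeriv ρ - ν.rnDeriv ρ) + ν.rnDeriv ρ) :=
        withDensity_mono (Filter.Eventually.of_forall fun a => le_tsub_add)
    _ = ρ.withDensity (μ.rnDeriv ρ - ν.rnDeriv ρ) + ρ.withDensity (ν.rnDeriv ρ) :=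
        withDensity_add_right _ (Measure.measurable_rnDeriv _ _)
    _ = μ - ν + ν := by rw [← hsub, hν]

/-! ### Basic facts about `tv` -/

lemma tv_nonneg {α : Type*} [MeasurableSpace α] (μ ν : Measure α) : 0 ≤ tv μ ν :=
  ENNReal.toReal_nonneg

lemma tv_le_two {α : Type*} [MeasurableSpace α] (μ ν : Measure α)
    [IsProbabilityMeasure μ] [IsProbabilityMeasure ν] : tv μ ν ≤ 2 := by
  have h1 : (μ - ν) Set.univ ≤ 1 := by
    refine le_trans (Measure.le_iff'.mp Measure.sub_le _) ?_
    simp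
  have h2 : (ν - μ) Set.univ ≤ 1 := by
    refine le_trans (Measure.le_iff'.mp Measure.sub_le _) ?_
    simp
  have : (μ - ν) Set.univ + (ν - μ) Set.univ ≤ 2 := by
    calc (μ - ν) Set.univ + (ν - μ) Set.univ ≤ 1 + 1 := add_le_add h1 h2
      _ = 2 := one_add_one_eq_two
  calc tv μ ν ≤ (2 : ℝ≥0∞).toReal := ENNReal.toReal_mono (by norm_num) this
    _ = 2 := by norm_num

/-! ### Contraction of `tv` under `bind` -/

lemma tv_bind_le {G : Type*} [MeasurableSpace G] {F : G → Measure G} (hF : Measurable F)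
    (hFp : ∀ u, IsProbabilityMeasure (F u)) (μ ν : Measure G)
    [IsProbabilityMeasure μ] [IsProbabilityMeasure ν] :
    tv (μ.bind F) (ν.bind F) ≤ tv μ ν := by
  have hbind_mono : ∀ (a b : Measure G), a ≤ b → a.bind F ≤ b.bind F := by
    intro a b hab
    rw [Measure.le_iff]
    intro s hs
    rw [Measure.bind_apply hs hF.aemeasurable, Measure.bind_apply hs hF.aemeasurable]
    exact lintegral_mono' hab le_rfl
  have hbind_add : ∀ (a b : Measure G), (a + b).bind F = a.bind F + b.bind F := by
    intro a b
    ext s hs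
    rw [Measure.bind_apply hs hF.aemeasurable, Measure.add_apply, Measure.bind_apply hs hF.aemeasurable,
      Measure.bind_apply hs hF.aemeasurable, lintegral_add_measure]
  have key : ∀ (a b : Measure G), IsProbabilityMeasure a → IsProbabilityMeasure b →
      (a.bind F - b.bind F) Set.univ ≤ (a - b) Set.univ := by
    intro a b ha hb
    have h1 : a.bind F ≤ (a - b).bind F + b.bind F := by
      rw [← hbind_add]
      exact hbind_mono _ _ (Measure.le_sub_add' a b)
    have h2 : a.bind F - b.bind F ≤ (a - b).bind F := Measure.sub_le_of_le_add h1
    calc (a.bind F - b.bind F) Set.univ ≤ ((a - b).bind F) Set.univ := Measure.le_iff'.mp h2 _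
      _ = ∫⁻ u, F u Set.univ ∂(a - b) := Measure.bind_apply MeasurableSet.univ hF.aemeasurable
      _ = (a - b) Set.univ := by
          simp_rw [fun u => (hFp u).measure_univ]
          rw [lintegral_one]
  have hfin : (μ - ν) Set.univ + (ν - μ) Set.univ ≠ ∞ := by
    have h1 : (μ - ν) Set.univ ≤ μ Set.univ := Measure.le_iff'.mp Measure.sub_le _
    have h2 : (ν - μ) Set.univ ≤ ν Set.univ := Measure.le_iff'.mp Measure.sub_le _
    simp only [measure_univ] at h1 h2
    exact ne_top_of_le_ne_top (by norm_num)
      (add_le_add h1 h2 : _ ≤ (1 : ℝ≥0∞) + 1)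
  exact ENNReal.toReal_mono hfin
    (add_le_add (key μ ν inferInstance inferInstance) (key ν μ inferInstance inferInstance))

/-! ### Measurability of `tv` along kernels -/

lemma measurable_tv_kernel {α G : Type*} [MeasurableSpace α] [MeasurableSpace G]
    [MeasurableSpace.CountablyGenerated G]
    (KA KB : Kernel α G) [IsFiniteKernel KA] [IsFiniteKernel KB] :
    Measurable fun a => tv (KA a) (KB a) := by
  set η : Kernel α G := KA + KB with hη
  have hKAle : ∀ a, KA a ≪ η a := fun a => by
    rw [hη]
    exact Measure.absolutelyContinuous_of_le
      (by rw [Kernel.coe_add, Pi.add_apply]; exact Measure.le_add_right le_rfl)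
  have hKBle : ∀ a, KB a ≪ η a := fun a => by
    rw [hη]
    exact Measure.absolutelyContinuous_of_le
      (by rw [Kernel.coe_add, Pi.add_apply]; exact Measure.le_add_left le_rfl)
  set f := Kernel.rnDeriv KA η with hfdef
  set g := Kernel.rnDeriv KB η with hgdef
  have hfm : Measurable fun p : α × G => f p.1 p.2 := Kernel.measurable_rnDeriv _ _
  have hgm : Measurable fun p : α × G => g p.1 p.2 := Kernel.measurable_rnDeriv _ _
  have hAa : ∀ a, KA a = (η a).withDensity (f a) := by
    intro a
    have h1 : f a =ᵐ[η a] Measure.rnDeriv (KA a) (η a) :=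
      Kernel.rnDeriv_eq_rnDeriv_measure
    rw [withDensity_congr_ae h1, Measure.withDensity_rnDeriv_eq _ _ (hKAle a)]
  have hBa : ∀ a, KB a = (η a).withDensity (g a) := by
    intro a
    have h1 : g a =ᵐ[η a] Measure.rnDeriv (KB a) (η a) :=
      Kernel.rnDeriv_eq_rnDeriv_measure
    rw [withDensity_congr_ae h1, Measure.withDensity_rnDeriv_eq _ _ (hKBle a)]
  have key : (fun a => tv (KA a) (KB a)) = fun a =>
      ((∫⁻ x, (f a x - g a x) ∂(η a)) + (∫⁻ x, (g a x - f a x) ∂(η a))).toReal := by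
    funext a
    have hfa : Measurable (f a) := Kernel.measurable_rnDeriv_right _ _ a
    have hga : Measurable (g a) := Kernel.measurable_rnDeriv_right _ _ a
    have hgfin : ∫⁻ x, g a x ∂(η a) ≠ ∞ := by
      have : (η a).withDensity (g a) Set.univ ≠ ∞ := by
        rw [← hBa a]; exact measure_ne_top _ _
      rwa [withDensity_apply _ MeasurableSet.univ, Measure.restrict_univ] at this
    have hffin : ∫⁻ x, f a x ∂(η a) ≠ ∞ := by
      have : (η a).withDensity (f a) Set.univ ≠ ∞ := by
        rw [← hAa a]; exact measure_ne_top _ _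
      rwa [withDensity_apply _ MeasurableSet.univ, Measure.restrict_univ] at this
    rw [tv, hAa a, hBa a, wd_sub_wd _ hfa hga hgfin, wd_sub_wd _ hga hfa hffin,
      withDensity_apply _ MeasurableSet.univ, withDensity_apply _ MeasurableSet.univ,
      Measure.restrict_univ]
    simp [Pi.sub_apply]
  rw [key]
  have h1 : Measurable (Function.uncurry fun (a : α) (x : G) => f a x - g a x) :=
    hfm.sub hgm
  have h2 : Measurable (Function.uncurry fun (a : α) (x : G) => g a x - f a x) :=
    hgm.sub hfm
  exact ((Measurable.lintegral_kernel_prod_right h1).add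
    (Measurable.lintegral_kernel_prod_right h2)).ennreal_toReal

/-! ### `ltrans` basics -/

variable {G X : Type*} [MeasurableSpace G] [Group G] [MeasurableMul₂ G] [MeasurableInv G]
  [MeasurableSpace X] [MulAction G X] [MeasurableSMul₂ G X]

lemma isProbabilityMeasure_ltrans (g : G) (μ : Measure G) [IsProbabilityMeasure μ] :
    IsProbabilityMeasure (ltrans g μ) :=
  Measure.isProbabilityMeasure_map (measurable_const_mul g).aemeasurable

lemma ltrans_ltrans (g h : G) (μ : Measure G) :
    ltrans g (ltrans h μ) = ltrans (g * h) μ := by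
  rw [ltrans, ltrans, ltrans, Measure.map_map (measurable_const_mul g) (measurable_const_mul h)]
  congr 1
  funext u
  simp [Function.comp, mul_assoc]

lemma ltrans_one (μ : Measure G) : ltrans (1 : G) μ = μ := by
  rw [ltrans]
  have : (fun h : G => (1 : G) * h) = id := by funext h; simp
  rw [this, Measure.map_id]

lemma ltrans_bind (g : G) (μ : Measure G) {F : G → Measure G} (hF : Measurable F) :
    ltrans g (μ.bind F) = μ.bind fun u => ltrans g (F u) := by
  have hdg : Measurable fun x : G => Measure.dirac (g * x) :=
    Measure.measurable_dirac.comp (measurable_const_mul g)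
  rw [ltrans, ← Measure.bind_dirac_eq_map _ (measurable_const_mul g),
    Measure.bind_bind hF.aemeasurable hdg.aemeasurable]
  refine congrArg (Measure.bind μ) (funext fun u => ?_)
  rw [ltrans, Measure.bind_dirac_eq_map _ (measurable_const_mul g)]

lemma bind_map' (μ : Measure G) {T : G → G} (hT : Measurable T) {F : G → Measure G}
    (hF : Measurable F) : (μ.map T).bind F = μ.bind fun a => F (T a) := by
  have hdT : Measurable fun x : G => Measure.dirac (T x) := Measure.measurable_dirac.comp hT
  rw [← Measure.bind_dirac_eq_map μ hT, Measure.bind_bind hdT.aemeasurable hF.aemeasurable]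
  exact congrArg (Measure.bind μ) (funext fun a => Measure.dirac_bind hF (T a))

/-! ### Systems: measurability -/

lemma measurable_pair_ltrans {φ : X → Measure G} (hφ : IsSystem φ) :
    Measurable fun p : G × X => ltrans p.1 (φ (p.1⁻¹ • p.2)) := by
  apply Measure.measurable_of_measurable_coe
  intro s hs
  have hν : Measurable fun p : G × X => φ (p.1⁻¹ • p.2) :=
    hφ.1.comp (measurable_fst.inv.smul measurable_snd)
  let K : Kernel (G × X) G := ⟨fun p => φ (p.1⁻¹ • p.2), hν⟩
  haveI : IsMarkovKernel K := ⟨fun p => hφ.2 _⟩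
  have heq : (fun p : G × X => ltrans p.1 (φ (p.1⁻¹ • p.2)) s)
      = fun p : G × X => ∫⁻ h, s.indicator (fun _ => (1 : ℝ≥0∞)) (p.1 * h) ∂(K p) := by
    funext p
    rw [ltrans, Measure.map_apply (measurable_const_mul p.1) hs,
      ← lintegral_indicator_one ((measurable_const_mul p.1) hs)]
    exact lintegral_congr fun h => rfl
  rw [heq]
  exact Measurable.lintegral_kernel_prod_right
    ((measurable_one.indicator hs).comp (measurable_fst.fst.mul measurable_snd))

lemma measurable_ltrans_fun {φ : X → Measure G} (hφ : IsSystem φ) (x : X) :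
    Measurable fun u : G => ltrans u (φ (u⁻¹ • x)) :=
  (measurable_pair_ltrans hφ).comp (measurable_id.prodMk measurable_const)

lemma isSystem_sconv {θ φ : X → Measure G} (hθ : IsSystem θ) (hφ : IsSystem φ) :
    IsSystem (sconv θ φ) := by
  have hpair := measurable_pair_ltrans hφ
  have hFx : ∀ x : X, Measurable fun u : G => ltrans u (φ (u⁻¹ • x)) :=
    measurable_ltrans_fun hφ
  constructor
  · apply Measure.measurable_of_measurable_coe
    intro s hs
    let K : Kernel X G := ⟨θ, hθ.1⟩
    haveI : IsMarkovKernel K := ⟨fun x => hθ.2 x⟩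
    have heq : (fun x => sconv θ φ x s)
        = fun x => ∫⁻ u, ltrans u (φ (u⁻¹ • x)) s ∂(K x) := by
      funext x
      exact Measure.bind_apply hs (hFx x).aemeasurable
    rw [heq]
    exact Measurable.lintegral_kernel_prod_right
      ((Measure.measurable_coe hs).comp (hpair.comp (measurable_snd.prodMk measurable_fst)))
  · intro x
    constructor
    rw [sconv, Measure.bind_apply MeasurableSet.univ (hFx x).aemeasurable]
    have h1 : ∀ u : G, ltrans u (φ (u⁻¹ • x)) Set.univ = 1 := fun u => by
      haveI := hφ.2 (u⁻¹ • x)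
      haveI := isProbabilityMeasure_ltrans u (φ (u⁻¹ • x))
      exact measure_univ
    simp_rw [h1]
    rw [lintegral_one]
    exact (hθ.2 x).measure_univ

lemma isSystem_sconvPow {θ : X → Measure G} (hθ : IsSystem θ) (k : ℕ) :
    IsSystem (sconvPow θ k) := by
  induction k with
  | zero => exact ⟨measurable_const, fun x => by rw [sconvPow]; infer_instance⟩
  | succ k ih => exact isSystem_sconv hθ ih

/-! ### Expansion and associativity of `sconv` -/

lemma ltrans_sconv {φ ψ : X → Measure G} (hψ : IsSystem ψ) (g : G) (x : X) :
    ltrans g (sconv φ ψ (g⁻¹ • x))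
      = (ltrans g (φ (g⁻¹ • x))).bind fun u => ltrans u (ψ (u⁻¹ • x)) := by
  rw [sconv, ltrans_bind g _ (measurable_ltrans_fun hψ (g⁻¹ • x)), ltrans,
    bind_map' _ (measurable_const_mul g) (measurable_ltrans_fun hψ x)]
  refine congrArg (Measure.bind (φ (g⁻¹ • x))) (funext fun h => ?_)
  rw [ltrans_ltrans]
  congr 2
  rw [smul_smul, mul_inv_rev]

lemma sconv_assoc {θ φ ψ : X → Measure G} (hφ : IsSystem φ) (hψ : IsSystem ψ) :
    sconv θ (sconv φ ψ) = sconv (sconv θ φ) ψ := by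
  funext x
  have hGx : Measurable fun g : G => ltrans g (φ (g⁻¹ • x)) := measurable_ltrans_fun hφ x
  have hFx : Measurable fun u : G => ltrans u (ψ (u⁻¹ • x)) := measurable_ltrans_fun hψ x
  have h1 : sconv θ (sconv φ ψ) x
      = (θ x).bind fun g => (ltrans g (φ (g⁻¹ • x))).bind fun u => ltrans u (ψ (u⁻¹ • x)) := by
    rw [sconv]
    exact congrArg (Measure.bind (θ x)) (funext fun g => ltrans_sconv hψ g x)
  rw [h1]
  show _ = ((θ x).bind fun g => ltrans g (φ (g⁻¹ • x))).bind fun u => ltrans u (ψ (u⁻¹ • x))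
  rw [Measure.bind_bind hGx.aemeasurable hFx.aemeasurable]

lemma sconvPow_succ_comm {θ : X → Measure G} (hθ : IsSystem θ) (k : ℕ) :
    sconvPow θ (k + 1) = sconv (sconvPow θ k) θ := by
  induction k with
  | zero =>
    show sconv θ (sconvPow θ 0) = sconv (sconvPow θ 0) θ
    have h0 : sconvPow θ 0 = fun _ : X => Measure.dirac (1 : G) := rfl
    have h1 : sconv θ (sconvPow θ 0) = θ := by
      funext x
      show (θ x).bind (fun g : G => ltrans g (Measure.dirac (1 : G))) = θ x
      have : (fun g : G => ltrans g (Measure.dirac (1 : G))) = fun g : G => Measure.dirac g := by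
        funext g
        rw [ltrans, Measure.map_dirac' (measurable_const_mul g), mul_one]
      rw [this, Measure.bind_dirac]
    have h2 : sconv (sconvPow θ 0) θ = θ := by
      funext x
      rw [sconv, h0]
      rw [Measure.dirac_bind (measurable_ltrans_fun hθ x)]
      rw [inv_one, one_smul, ltrans_one]
    exact h1.trans h2.symm
  | succ k ih =>
    show sconv θ (sconvPow θ (k + 1)) = sconv (sconvPow θ (k + 1)) θ
    calc sconv θ (sconvPow θ (k + 1)) = sconv θ (sconv (sconvPow θ k) θ) := by rw [ih]
      _ = sconv (sconv θ (sconvPow θ k)) θ := sconv_assoc (isSystem_sconvPow hθ k) hθ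
      _ = sconv (sconvPow θ (k + 1)) θ := rfl

/-! ### Discrepancy: contraction, antitonicity, measurability -/

lemma dsys_sconv_le {φ θ : X → Measure G} (hφ : IsSystem φ) (hθ : IsSystem θ) (p : G × X) :
    Dsys (sconv φ θ) p ≤ Dsys φ p := by
  obtain ⟨g, x⟩ := p
  have hF : Measurable fun u : G => ltrans u (θ (u⁻¹ • x)) := measurable_ltrans_fun hθ x
  have hFp : ∀ u : G, IsProbabilityMeasure (ltrans u (θ (u⁻¹ • x))) := fun u => by
    haveI := hθ.2 (u⁻¹ • x)
    exact isProbabilityMeasure_ltrans u _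
  haveI := hφ.2 x
  haveI := hφ.2 (g⁻¹ • x)
  haveI : IsProbabilityMeasure (ltrans g (φ (g⁻¹ • x))) := isProbabilityMeasure_ltrans g _
  have h1 : ltrans g (sconv φ θ (g⁻¹ • x))
      = (ltrans g (φ (g⁻¹ • x))).bind fun u => ltrans u (θ (u⁻¹ • x)) := ltrans_sconv hθ g x
  have h2 : sconv φ θ x = (φ x).bind fun u => ltrans u (θ (u⁻¹ • x)) := rfl
  show tv (ltrans g (sconv φ θ (g⁻¹ • x))) (sconv φ θ x) ≤ tv (ltrans g (φ (g⁻¹ • x))) (φ x)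
  rw [h1, h2]
  exact tv_bind_le hF hFp _ _

lemma dsys_antitone {θ : X → Measure G} (hθ : IsSystem θ) (p : G × X) :
    Antitone fun k => Dsys (sconvPow θ k) p := by
  refine antitone_nat_of_succ_le fun k => ?_
  rw [sconvPow_succ_comm hθ k]
  exact dsys_sconv_le (isSystem_sconvPow hθ k) hθ p

lemma measurable_dsys [MeasurableSpace.CountablyGenerated G] {φ : X → Measure G}
    (hφ : IsSystem φ) : Measurable (Dsys φ : G × X → ℝ) := by
  let KA : Kernel (G × X) G := ⟨fun p => ltrans p.1 (φ (p.1⁻¹ • p.2)), measurable_pair_ltrans hφ⟩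
  let KB : Kernel (G × X) G := ⟨fun p => φ p.2, hφ.1.comp measurable_snd⟩
  haveI : IsMarkovKernel KA := ⟨fun p => by
    haveI := hφ.2 (p.1⁻¹ • p.2)
    exact isProbabilityMeasure_ltrans p.1 _⟩
  haveI : IsMarkovKernel KB := ⟨fun p => hφ.2 _⟩
  exact measurable_tv_kernel KA KB

lemma dsys_nonneg {φ : X → Measure G} (p : G × X) : 0 ≤ Dsys φ p := tv_nonneg _ _

lemma dsys_le_two {φ : X → Measure G} (hφ : IsSystem φ) (p : G × X) : Dsys φ p ≤ 2 := by
  haveI := hφ.2 p.2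
  haveI := hφ.2 (p.1⁻¹ • p.2)
  haveI : IsProbabilityMeasure (ltrans p.1 (φ (p.1⁻¹ • p.2))) :=
    isProbabilityMeasure_ltrans p.1 _
  exact tv_le_two _ _

end Stmt16Aux


/-- For a system `θ` on `(G, X)` and a probability measure `m` on `G × X`
equivalent to `λ ⊗ κ`: `Δ(m, θ^{⊛k}) → 0` as `k → ∞` iff `D_{θ^{⊛k}}(g, x) → 0` as
`k → ∞` for `(λ ⊗ κ)`-almost every `(g, x)`. -/
theorem stmt16 {G X : Type*} [TopologicalSpace G] [Group G] [IsTopologicalGroup G]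
    [LocallyCompactSpace G] [SecondCountableTopology G] [MeasurableSpace G] [BorelSpace G]
    [MeasurableSpace X] [StandardBorelSpace X] [MulAction G X] [MeasurableSMul₂ G X]
    (lam : Measure G) (hlam : lam.IsHaarMeasure)
    (κ : Measure X) (hκ : SigmaFinite κ)
    (θ : X → Measure G) (hθ : IsSystem θ)
    (m : Measure (G × X)) (hm : IsProbabilityMeasure m)
    (hmac : m ≪ lam.prod κ) (hacm : lam.prod κ ≪ m) :
    Tendsto (fun k => sdisc m (sconvPow θ k)) atTop (nhds 0) ↔
      ∀ᵐ p ∂(lam.prod κ),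
        Tendsto (fun k => Dsys (sconvPow θ k) p) atTop (nhds 0) := by
  have hmeas : ∀ k, Measurable (Dsys (sconvPow θ k) : G × X → ℝ) := fun k =>
    measurable_dsys (isSystem_sconvPow hθ k)
  have hnn : ∀ k p, 0 ≤ Dsys (sconvPow θ k) p := fun k p => dsys_nonneg p
  have hb2 : ∀ k p, Dsys (sconvPow θ k) p ≤ 2 := fun k p =>
    dsys_le_two (isSystem_sconvPow hθ k) p
  have hant : ∀ p, Antitone fun k => Dsys (sconvPow θ k) p := dsys_antitone hθ
  have hbdd : ∀ p : G × X, BddBelow (Set.range fun k => Dsys (sconvPow θ k) p) := fun p =>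
    ⟨0, by rintro y ⟨k, rfl⟩; exact hnn k p⟩
  set Dlim : G × X → ℝ := fun p => ⨅ k, Dsys (sconvPow θ k) p with hDlim
  have hDlim_meas : Measurable Dlim := Measurable.iInf hmeas
  have hDlim_nn : ∀ p, 0 ≤ Dlim p := fun p => le_ciInf fun k => hnn k p
  have htend : ∀ p, Tendsto (fun k => Dsys (sconvPow θ k) p) atTop (nhds (Dlim p)) :=
    fun p => tendsto_atTop_ciInf (hant p) (hbdd p)
  have hint : ∀ k, Integrable (Dsys (sconvPow θ k)) m := fun k => by
    refine Integrable.mono' (integrable_const (2 : ℝ)) (hmeas k).aestronglyMeasurable ?_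
    exact Filter.Eventually.of_forall fun p => by
      rw [Real.norm_eq_abs, abs_of_nonneg (hnn k p)]; exact hb2 k p
  have hDlim_int : Integrable Dlim m := by
    refine Integrable.mono' (integrable_const (2 : ℝ)) hDlim_meas.aestronglyMeasurable ?_
    exact Filter.Eventually.of_forall fun p => by
      rw [Real.norm_eq_abs, abs_of_nonneg (hDlim_nn p)]
      exact le_trans (ciInf_le (hbdd p) 0) (hb2 0 p)
  constructor
  · intro h
    have hle : ∀ k, ∫ p, Dlim p ∂m ≤ sdisc m (sconvPow θ k) := fun k =>
      integral_mono hDlim_int (hint k) fun p => ciInf_le (hbdd p) k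
    have h0 : ∫ p, Dlim p ∂m = 0 := by
      refine le_antisymm ?_ (integral_nonneg hDlim_nn)
      exact ge_of_tendsto h (Filter.Eventually.of_forall hle)
    have hae0 : Dlim =ᵐ[m] 0 :=
      (integral_eq_zero_iff_of_nonneg hDlim_nn hDlim_int).mp h0
    have hae0' : Dlim =ᵐ[lam.prod κ] 0 := hae0.filter_mono hacm.ae_le
    filter_upwards [hae0'] with p hp
    have := htend p
    rw [hp] at this
    exact this
  · intro h
    have hmae : ∀ᵐ p ∂m, Tendsto (fun k => Dsys (sconvPow θ k) p) atTop (nhds 0) :=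
      h.filter_mono hmac.ae_le
    have : Tendsto (fun k => ∫ p, Dsys (sconvPow θ k) p ∂m) atTop
        (nhds (∫ _p : G × X, (0 : ℝ) ∂m)) := by
      refine tendsto_integral_of_dominated_convergence (fun _ => (2 : ℝ))
        (fun k => (hmeas k).aestronglyMeasurable) (integrable_const 2) ?_ ?_
      · exact fun k => Filter.Eventually.of_forall fun p => by
          rw [Real.norm_eq_abs, abs_of_nonneg (hnn k p)]; exact hb2 k p
      · exact hmae
    simpa [sdisc] using this
end
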